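/- arXiv:math/0407345 — 5 statements merged into one kernel-verified Lean document; each statement's English description precedes it below -/
import Mathlib

section
/- Let $k \in \mathbb{N}$ and $0 < m_1 < m_2 < \cdots < m_k$ be real numbers. Then there exists a constant $c > 0$ such that for all $S > 0$, the integral of $e^{t_1 + \cdots + t_k}$ over the simplex $\Delta = \{(t_1,\ldots,t_k) : t_i \geq 0 \text{ for all } i, \sum_{i=1}^k m_i t_i \leq S\}$ is at most $c \, e^{S/m_1}$. -/
open MeasureTheory

private lemma simplex_measSet {k : ℕ} (m : Fin k → ℝ) (S : ℝ) :
    MeasurableSet {t : Fin k → ℝ | (∀ i, 0 ≤ t i) ∧ ∑ i, m i * t i ≤ S} := by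
  have h1 : MeasurableSet {t : Fin k → ℝ | ∀ i, 0 ≤ t i} := by
    rw [Set.setOf_forall]
    exact MeasurableSet.iInter fun i =>
      measurableSet_le measurable_const (measurable_pi_apply i)
  have h2 : MeasurableSet {t : Fin k → ℝ | ∑ i, m i * t i ≤ S} :=
    measurableSet_le (Finset.measurable_sum _ fun i _ =>
      by fun_prop) measurable_const
  exact h1.inter h2

private lemma simplex_measF {k : ℕ} :
    Measurable fun t : Fin k → ℝ => ENNReal.ofReal (Real.exp (∑ i, t i)) :=
  (Real.measurable_exp.comp (Finset.measurable_sum _ fun i _ =>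
    measurable_pi_apply i)).ennreal_ofReal

private lemma simplex_aux (n : ℕ) : ∀ (m : Fin (n+1) → ℝ), StrictMono m → 0 < m 0 →
    ∃ c : ℝ, 0 < c ∧ ∀ S : ℝ,
      (∫⁻ t in {t : Fin (n+1) → ℝ | (∀ i, 0 ≤ t i) ∧ ∑ i, m i * t i ≤ S},
        ENNReal.ofReal (Real.exp (∑ i, t i))) ≤ ENNReal.ofReal (c * Real.exp (S / m 0)) := by
  induction n with
  | zero =>
    intro m hmono h0
    refine ⟨1, one_pos, fun S => ?_⟩
    rw [← lintegral_indicator (simplex_measSet m S)]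
    have hmp := (volume_preserving_funUnique (Fin 1) ℝ).symm
    erw [← hmp.lintegral_comp_emb (MeasurableEquiv.measurableEmbedding _)]
    set e := MeasurableEquiv.funUnique (Fin 1) ℝ
    have hsymm : ∀ x : ℝ, e.symm x = fun _ : Fin 1 => x := fun _ => rfl
    have key : ∀ x : ℝ,
        Set.indicator {t : Fin 1 → ℝ | (∀ i, 0 ≤ t i) ∧ ∑ i, m i * t i ≤ S}
          (fun t => ENNReal.ofReal (Real.exp (∑ i, t i))) (e.symm x)
        = Set.indicator {x : ℝ | 0 ≤ x ∧ m 0 * x ≤ S}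
            (fun x => ENNReal.ofReal (Real.exp x)) x := by
      intro x
      rw [hsymm]
      simp [Set.indicator_apply, Fin.forall_fin_one, Fin.sum_univ_one]
    simp only [key]
    have hsub : {x : ℝ | 0 ≤ x ∧ m 0 * x ≤ S} ⊆ Set.Icc 0 (S / m 0) := by
      rintro x ⟨hx0, hx1⟩
      exact ⟨hx0, (le_div_iff₀' h0).mpr hx1⟩
    refine le_trans (lintegral_mono (fun x =>
      Set.indicator_le_indicator_of_subset hsub (fun _ => zero_le) x)) ?_
    rw [lintegral_indicator measurableSet_Icc]
    have hint : IntegrableOn Real.exp (Set.Icc 0 (S / m 0)) :=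
      Real.continuous_exp.integrableOn_Icc
    rw [← ofReal_integral_eq_lintegral_ofReal hint
      (ae_of_all _ fun x => (Real.exp_pos x).le)]
    apply ENNReal.ofReal_le_ofReal
    rw [one_mul]
    rcases le_or_gt 0 (S / m 0) with hT | hT
    · rw [MeasureTheory.integral_Icc_eq_integral_Ioc,
        ← intervalIntegral.integral_of_le hT, integral_exp]
      linarith [Real.exp_pos (0 : ℝ)]
    · rw [Set.Icc_eq_empty (by linarith)]
      simp [Real.exp_nonneg]
  | succ n ih =>
    intro m hmono h0
    set m' : Fin (n+1) → ℝ := fun i => m i.castSucc with hm'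
    have hmono' : StrictMono m' := fun i j hij =>
      hmono (Fin.castSucc_lt_castSucc_iff.mpr hij)
    have hm0 : m' 0 = m 0 := by simp [hm']
    have h0' : 0 < m' 0 := by rw [hm0]; exact h0
    obtain ⟨c, hc, hC⟩ := ih m' hmono' h0'
    set M := m (Fin.last (n+1)) with hMdef
    have hM : m 0 < M := hmono (by simp [Fin.lt_iff_val_lt_val])
    set δ := M / m 0 - 1 with hδ
    have hδpos : 0 < δ := by
      have := (one_lt_div h0).mpr hM
      simp only [hδ]; linarith
    have hIint : IntegrableOn (fun x => Real.exp (-δ * x)) (Set.Ici 0) := by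
      rw [integrableOn_Ici_iff_integrableOn_Ioi]
      exact exp_neg_integrableOn_Ioi 0 hδpos
    set I := ∫ x in Set.Ici (0:ℝ), Real.exp (-δ * x) with hIdef
    have hI0 : 0 ≤ I := setIntegral_nonneg measurableSet_Ici fun x _ => (Real.exp_pos _).le
    refine ⟨c * (I + 1), by positivity, fun S => ?_⟩
    rw [← lintegral_indicator (simplex_measSet m S)]
    have hmp := (volume_preserving_piFinSuccAbove (fun _ : Fin (n+2) => ℝ)
      (Fin.last (n+1))).symm
    rw [← hmp.lintegral_comp_emb (MeasurableEquiv.measurableEmbedding _)]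
    set e := MeasurableEquiv.piFinSuccAbove (fun _ : Fin (n+2) => ℝ) (Fin.last (n+1)) with he
    have hsymm : ∀ p : ℝ × (Fin (n+1) → ℝ), e.symm p = Fin.snoc p.2 p.1 := by
      intro p
      rw [he, MeasurableEquiv.piFinSuccAbove_symm_apply]
      simp [Fin.insertNth_last']
      exact funext fun x => Fin.snocEquiv_apply _ _ x
    rw [MeasureTheory.Measure.volume_eq_prod]
    have hfm : AEMeasurable (fun p : ℝ × (Fin (n+1) → ℝ) =>
        Set.indicator {t : Fin (n+2) → ℝ | (∀ i, 0 ≤ t i) ∧ ∑ i, m i * t i ≤ S}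
          (fun t => ENNReal.ofReal (Real.exp (∑ i, t i))) (e.symm p))
        (volume.prod volume) :=
      ((simplex_measF.indicator (simplex_measSet m S)).comp e.symm.measurable).aemeasurable
    rw [lintegral_prod _ hfm]
    have hnonneg : ∀ (a : ℝ) (y : Fin (n+1) → ℝ),
        (∀ i, 0 ≤ (Fin.snoc y a : Fin (n+2) → ℝ) i) ↔ (0 ≤ a ∧ ∀ i, 0 ≤ y i) := by
      intro a y
      constructor
      · intro h
        exact ⟨by simpa using h (Fin.last (n+1)), fun i => by simpa using h i.castSucc⟩
      · rintro ⟨h1, h2⟩ i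
        induction i using Fin.lastCases with
        | last => simpa using h1
        | cast i => simpa using h2 i
    have hsum1 : ∀ (a : ℝ) (y : Fin (n+1) → ℝ),
        ∑ i, (Fin.snoc y a : Fin (n+2) → ℝ) i = (∑ i, y i) + a := by
      intro a y
      rw [Fin.sum_univ_castSucc]
      simp
    have hsum2 : ∀ (a : ℝ) (y : Fin (n+1) → ℝ),
        ∑ i, m i * (Fin.snoc y a : Fin (n+2) → ℝ) i = (∑ i, m' i * y i) + M * a := by
      intro a y
      rw [Fin.sum_univ_castSucc]
      simp [hm', hMdef]
    have key : ∀ (a : ℝ) (y : Fin (n+1) → ℝ),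
        Set.indicator {t : Fin (n+2) → ℝ | (∀ i, 0 ≤ t i) ∧ ∑ i, m i * t i ≤ S}
          (fun t => ENNReal.ofReal (Real.exp (∑ i, t i))) (e.symm (a, y))
        = Set.indicator (Set.Ici (0:ℝ)) (fun b => ENNReal.ofReal (Real.exp b)) a *
          Set.indicator {y : Fin (n+1) → ℝ | (∀ i, 0 ≤ y i) ∧ ∑ i, m' i * y i ≤ S - M * a}
            (fun y => ENNReal.ofReal (Real.exp (∑ i, y i))) y := by
      intro a y
      rw [hsymm]
      simp only [Set.indicator_apply, Set.mem_setOf_eq, Set.mem_Ici, hnonneg, hsum1, hsum2]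
      by_cases ha : 0 ≤ a
      · by_cases hy : (∀ i, 0 ≤ y i) ∧ ∑ i, m' i * y i ≤ S - M * a
        · rw [if_pos ⟨⟨ha, hy.1⟩, by linarith [hy.2]⟩, if_pos ha, if_pos hy,
            Real.exp_add, ENNReal.ofReal_mul (Real.exp_nonneg _), mul_comm]
        · rw [if_neg, if_pos ha, if_neg hy, mul_zero]
          rintro ⟨⟨-, h1⟩, h2⟩
          exact hy ⟨h1, by linarith⟩
      · rw [if_neg, if_neg ha, zero_mul]
        rintro ⟨⟨h1, -⟩, -⟩
        exact ha h1
    simp only [key]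
    calc
      ∫⁻ a : ℝ, ∫⁻ y : Fin (n+1) → ℝ,
          Set.indicator (Set.Ici (0:ℝ)) (fun b => ENNReal.ofReal (Real.exp b)) a *
          Set.indicator {y : Fin (n+1) → ℝ | (∀ i, 0 ≤ y i) ∧ ∑ i, m' i * y i ≤ S - M * a}
            (fun y => ENNReal.ofReal (Real.exp (∑ i, y i))) y
        ≤ ∫⁻ a : ℝ, Set.indicator (Set.Ici (0:ℝ))
            (fun b => ENNReal.ofReal ((c * Real.exp (S / m 0)) * Real.exp (-δ * b))) a := by
          apply lintegral_mono
          intro a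
          dsimp only
          rw [lintegral_const_mul _ (simplex_measF.indicator (simplex_measSet m' (S - M * a)))]
          by_cases ha : a ∈ Set.Ici (0:ℝ)
          · rw [Set.indicator_of_mem ha, Set.indicator_of_mem ha]
            rw [lintegral_indicator (simplex_measSet m' (S - M * a))]
            refine le_trans (mul_le_mul_right (hC (S - M * a)) _) ?_
            rw [← ENNReal.ofReal_mul (Real.exp_nonneg _)]
            apply ENNReal.ofReal_le_ofReal
            rw [hm0]
            have : Real.exp a * Real.exp ((S - M * a) / m 0)
                = Real.exp (S / m 0) * Real.exp (-δ * a) := by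
              rw [← Real.exp_add, ← Real.exp_add]
              congr 1
              rw [hδ]
              field_simp
              ring
            refine le_of_eq ?_
            calc Real.exp a * (c * Real.exp ((S - M * a) / m 0))
                = c * (Real.exp a * Real.exp ((S - M * a) / m 0)) := by ring
              _ = c * Real.exp (S / m 0) * Real.exp (-δ * a) := by rw [this]; ring
          · rw [Set.indicator_of_notMem ha, Set.indicator_of_notMem ha, zero_mul]
      _ = ENNReal.ofReal (c * Real.exp (S / m 0) * I) := by
          rw [lintegral_indicator measurableSet_Ici]
          rw [← ofReal_integral_eq_lintegral_ofReal (hIint.const_mul _)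
            (ae_of_all _ fun x => by positivity)]
          rw [MeasureTheory.integral_const_mul]
      _ ≤ ENNReal.ofReal (c * (I + 1) * Real.exp (S / m 0)) := by
          apply ENNReal.ofReal_le_ofReal
          have hexp := Real.exp_pos (S / m 0)
          nlinarith

/-- Lemma on integrals of exponentials over simplices: for `0 < m 0 < m 1 < ... < m (k-1)`,
there is `c > 0` such that for all `S > 0`,
`∫_{Δ} e^{t₁+⋯+t_k} dt ≤ c e^{S / m 0}` where
`Δ = {t : ∀ i, 0 ≤ t i, ∑ m i * t i ≤ S}`. -/
theorem stmt0 (k : ℕ) (hk : 0 < k) (m : Fin k → ℝ)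
    (hpos : 0 < m ⟨0, hk⟩) (hmono : StrictMono m) :
    ∃ c : ℝ, 0 < c ∧ ∀ S : ℝ, 0 < S →
      (∫ t in {t : Fin k → ℝ | (∀ i, 0 ≤ t i) ∧ ∑ i, m i * t i ≤ S},
          Real.exp (∑ i, t i)) ≤ c * Real.exp (S / m ⟨0, hk⟩) := by
  obtain ⟨n, rfl⟩ : ∃ n, k = n + 1 := ⟨k - 1, (Nat.succ_pred_eq_of_pos hk).symm⟩
  have h00 : (⟨0, hk⟩ : Fin (n+1)) = 0 := rfl
  rw [h00] at hpos ⊢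
  obtain ⟨c, hc, hC⟩ := simplex_aux n m hmono hpos
  refine ⟨c, hc, fun S _ => ?_⟩
  have hcont : Continuous fun t : Fin (n+1) → ℝ => Real.exp (∑ i, t i) :=
    Real.continuous_exp.comp (continuous_finset_sum _ fun i _ => continuous_apply i)
  rw [integral_eq_lintegral_of_nonneg_ae (ae_of_all _ fun t => (Real.exp_pos _).le)
    hcont.aestronglyMeasurable]
  calc (∫⁻ t in {t : Fin (n+1) → ℝ | (∀ i, 0 ≤ t i) ∧ ∑ i, m i * t i ≤ S},
        ENNReal.ofReal (Real.exp (∑ i, t i))).toReal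
      ≤ (ENNReal.ofReal (c * Real.exp (S / m 0))).toReal :=
        ENNReal.toReal_mono ENNReal.ofReal_ne_top (hC S)
    _ = c * Real.exp (S / m 0) := ENNReal.toReal_ofReal (by positivity)
end

section
/- Let $\lambda$ be a nonzero linear functional on $\mathbb{R}^r$ and set $\delta = \max_{\|Y\| \leq 1} \lambda(Y)$ (with $\|\cdot\|$ the Euclidean norm). Then there is a constant $C > 0$ such that $\int_{B(0,T)} e^{\lambda(Y)} \, dY \sim C \, T^{(r-1)/2} e^{\delta T}$ as $T \to \infty$, i.e., the ratio of the two sides tends to 1. -/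
open MeasureTheory Filter Topology
open Set Real



lemma bound_integrable (δ p : ℝ) (hδ : 0 < δ) (hp : 0 ≤ p) :
    IntegrableOn (fun s : ℝ => Real.exp (-(δ*s)) * (2*s)^p) (Set.Ioi 0) := by
  have h := integrableOn_rpow_mul_exp_neg_mul_rpow (p := 1) (s := p) (by linarith) one_pos hδ
  have : IntegrableOn (fun s : ℝ => (2:ℝ)^p * (s ^ p * Real.exp (-δ * s ^ (1:ℝ)))) (Set.Ioi 0) :=
    h.const_mul _
  refine this.congr_fun (fun s hs => ?_) measurableSet_Ioi
  dsimp only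
  rw [Real.rpow_one, Real.mul_rpow (by norm_num) (le_of_lt hs)]
  ring_nf

lemma core (δ p : ℝ) (hδ : 0 < δ) (hp : 0 ≤ p) :
    Tendsto (fun T : ℝ => (∫ t in (-T)..T, Real.exp (δ*t) * (T^2 - t^2)^p) / (T^p * Real.exp (δ*T)))
      atTop (𝓝 (∫ s in Set.Ioi (0:ℝ), Real.exp (-(δ*s)) * (2*s)^p)) := by
  have key : Tendsto (fun T : ℝ =>
      ∫ s in Set.Ioi (0:ℝ), (Set.Ioc (0:ℝ) (2*T)).indicator
        (fun s => Real.exp (-(δ*s)) * (s*(2-s/T))^p) s)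
      atTop (𝓝 (∫ s in Set.Ioi (0:ℝ), Real.exp (-(δ*s)) * (2*s)^p)) := by
    apply tendsto_integral_filter_of_dominated_convergence
      (fun s : ℝ => Real.exp (-(δ*s)) * (2*s)^p)
    · filter_upwards with T
      apply Measurable.aestronglyMeasurable
      apply Measurable.indicator _ measurableSet_Ioc
      fun_prop
    · filter_upwards [eventually_gt_atTop (0:ℝ)] with T hT
      filter_upwards [ae_restrict_mem measurableSet_Ioi] with s hs
      have hs0 : (0:ℝ) < s := hs
      by_cases hmem : s ∈ Set.Ioc (0:ℝ) (2*T)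
      · rw [Set.indicator_of_mem hmem]
        obtain ⟨-, hs2T⟩ := hmem
        have hd : s/T ≤ 2 := by rw [div_le_iff₀ hT]; linarith
        have hd0 : 0 ≤ s/T := by positivity
        have h1 : 0 ≤ s*(2-s/T) := by nlinarith
        have h2 : s*(2-s/T) ≤ 2*s := by nlinarith
        rw [Real.norm_eq_abs, abs_mul, abs_of_pos (Real.exp_pos _),
          abs_of_nonneg (Real.rpow_nonneg h1 _)]
        exact mul_le_mul_of_nonneg_left (Real.rpow_le_rpow h1 h2 hp) (Real.exp_pos _).le
      · rw [Set.indicator_of_notMem hmem, norm_zero]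
        exact mul_nonneg (Real.exp_pos _).le (Real.rpow_nonneg (by linarith) _)
    · exact bound_integrable δ p hδ hp
    · filter_upwards [ae_restrict_mem measurableSet_Ioi] with s hs
      have hs0 : (0:ℝ) < s := hs
      have hev : ∀ᶠ T : ℝ in atTop,
          Real.exp (-(δ*s)) * (s*(2-s/T))^p
            = (Set.Ioc (0:ℝ) (2*T)).indicator (fun s => Real.exp (-(δ*s)) * (s*(2-s/T))^p) s := by
        filter_upwards [eventually_ge_atTop s] with T hT
        exact (Set.indicator_of_mem (Set.mem_Ioc.mpr ⟨hs0, by linarith⟩) (fun s => Real.exp (-(δ*s)) * (s*(2-s/T))^p)).symm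
      apply Tendsto.congr' hev
      have hdiv : Tendsto (fun T : ℝ => s/T) atTop (𝓝 0) :=
        tendsto_const_nhds.div_atTop tendsto_id
      have h1 : Tendsto (fun T : ℝ => s*(2-s/T)) atTop (𝓝 (2*s)) := by
        have h := Tendsto.mul (tendsto_const_nhds (x := s) (f := (atTop : Filter ℝ)))
          (Tendsto.sub (tendsto_const_nhds (x := (2:ℝ))) hdiv)
        simpa [mul_comm] using h
      have h2 : Tendsto (fun T : ℝ => (s*(2-s/T))^p) atTop (𝓝 ((2*s)^p)) :=
        (Real.continuousAt_rpow_const _ _ (Or.inr hp)).tendsto.comp h1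
      exact tendsto_const_nhds.mul h2
  apply Tendsto.congr' _ key
  filter_upwards [eventually_gt_atTop (0:ℝ)] with T hT
  have hTne : T ≠ 0 := ne_of_gt hT
  have e1 : (∫ s in (0:ℝ)..(2*T), Real.exp (δ*(T-s)) * (T^2 - (T-s)^2)^p)
      = ∫ t in (-T)..T, Real.exp (δ*t) * (T^2 - t^2)^p := by
    rw [intervalIntegral.integral_comp_sub_left (fun t => Real.exp (δ*t) * (T^2 - t^2)^p) T]
    congr 1 <;> ring
  have e2 : (∫ s in (0:ℝ)..(2*T), Real.exp (δ*(T-s)) * (T^2 - (T-s)^2)^p) / (T^p * Real.exp (δ*T))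
      = ∫ s in (0:ℝ)..(2*T), Real.exp (-(δ*s)) * (s*(2-s/T))^p := by
    rw [div_eq_iff (by positivity), ← intervalIntegral.integral_mul_const]
    apply intervalIntegral.integral_congr
    intro s hs
    rw [Set.uIcc_of_le (by linarith)] at hs
    obtain ⟨hs0, hs2T⟩ := hs
    dsimp only
    have hd : s/T ≤ 2 := by rw [div_le_iff₀ hT]; linarith
    have hd0 : 0 ≤ s/T := by positivity
    have h0 : 0 ≤ s*(2-s/T) := by nlinarith
    have hfac : T^2 - (T-s)^2 = (s*(2-s/T)) * T := by field_simp; ring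
    rw [hfac, Real.mul_rpow h0 hT.le, show δ*(T-s) = -(δ*s) + δ*T by ring, Real.exp_add]
    ring
  rw [MeasureTheory.setIntegral_indicator measurableSet_Ioc,
    Set.inter_eq_self_of_subset_right Set.Ioc_subset_Ioi_self,
    ← intervalIntegral.integral_of_le (by linarith : (0:ℝ) ≤ 2*T), ← e2, e1]


noncomputable def Phi (m : ℕ) : EuclideanSpace ℝ (Fin (m+1)) ≃ᵐ ℝ × EuclideanSpace ℝ (Fin m) :=
  (MeasurableEquiv.toLp 2 (Fin (m+1) → ℝ)).symm.trans
    ((MeasurableEquiv.piFinSuccAbove (fun _ : Fin (m+1) => ℝ) 0).trans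
      ((MeasurableEquiv.refl ℝ).prodCongr (MeasurableEquiv.toLp 2 (Fin m → ℝ))))

lemma Phi_mp (m : ℕ) : MeasurePreserving (Phi m) volume volume := by
  have h1 := EuclideanSpace.volume_preserving_symm_measurableEquiv_toLp (Fin (m+1))
  have h2 := MeasureTheory.volume_preserving_piFinSuccAbove (fun _ : Fin (m+1) => ℝ) 0
  have h3 := (MeasurePreserving.id (volume : Measure ℝ)).prod
    (EuclideanSpace.volume_preserving_symm_measurableEquiv_toLp (Fin m)).symm
  exact h1.trans (h2.trans h3)

lemma Phi_fst (m : ℕ) (x : EuclideanSpace ℝ (Fin (m+1))) : (Phi m x).1 = x 0 := rfl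

lemma Phi_snd (m : ℕ) (x : EuclideanSpace ℝ (Fin (m+1))) (j : Fin m) :
    (Phi m x).2 j = x j.succ := rfl

lemma Phi_norm (m : ℕ) (x : EuclideanSpace ℝ (Fin (m+1))) :
    ‖x‖^2 = (Phi m x).1^2 + ‖(Phi m x).2‖^2 := by
  rw [PiLp.norm_sq_eq_of_L2, PiLp.norm_sq_eq_of_L2, Fin.sum_univ_succ]
  simp only [Real.norm_eq_abs, sq_abs]
  congr 1

lemma slice_vol (m : ℕ) {c : ℝ} (hc : 0 ≤ c) :
    volume {y : EuclideanSpace ℝ (Fin m) | ‖y‖^2 ≤ c}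
      = ENNReal.ofReal (c ^ ((m:ℝ)/2)) * volume (Metric.ball (0:EuclideanSpace ℝ (Fin m)) 1) := by
  have hset : {y : EuclideanSpace ℝ (Fin m) | ‖y‖^2 ≤ c} = Metric.closedBall 0 (Real.sqrt c) := by
    ext y
    rw [Metric.mem_closedBall, dist_zero_right, Set.mem_setOf_eq,
      Real.le_sqrt (norm_nonneg y) hc]
  rw [hset, Measure.addHaar_closedBall _ _ (Real.sqrt_nonneg c)]
  congr 2
  rw [finrank_euclideanSpace, Fintype.card_fin, Real.sqrt_eq_rpow,
    ← Real.rpow_natCast (c ^ (1/(2:ℝ))) m, ← Real.rpow_mul hc]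
  norm_num
  ring_nf

lemma slice_integral (m : ℕ) (δ T : ℝ) (hT : 0 < T) :
    ∫ x in Metric.closedBall (0 : EuclideanSpace ℝ (Fin (m+1))) T, Real.exp (δ * x 0)
      = (volume (Metric.ball (0:EuclideanSpace ℝ (Fin m)) 1)).toReal *
        ∫ t in (-T)..T, Real.exp (δ*t) * (T^2 - t^2)^((m:ℝ)/2) := by
  set κ := volume (Metric.ball (0:EuclideanSpace ℝ (Fin m)) 1) with hκ
  set S : Set (ℝ × EuclideanSpace ℝ (Fin m)) := {p | p.1^2 + ‖p.2‖^2 ≤ T^2} with hSdef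
  have hS : MeasurableSet S := by
    apply IsClosed.measurableSet
    apply isClosed_le _ continuous_const
    fun_prop
  -- step 1 : reduce to S
  have hpre : (Phi m).symm ⁻¹' (Metric.closedBall 0 T) = S := by
    ext p
    have hn := Phi_norm m ((Phi m).symm p)
    rw [MeasurableEquiv.apply_symm_apply] at hn
    simp only [Set.mem_preimage, Metric.mem_closedBall, dist_zero_right, hSdef,
      Set.mem_setOf_eq]
    constructor
    · intro h
      nlinarith [norm_nonneg ((Phi m).symm p)]
    · intro h
      nlinarith [norm_nonneg ((Phi m).symm p)]
  have hg : ∀ p : ℝ × EuclideanSpace ℝ (Fin m), ((Phi m).symm p) 0 = p.1 := by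
    intro p
    have h := Phi_fst m ((Phi m).symm p)
    rw [MeasurableEquiv.apply_symm_apply] at h
    exact h.symm
  have step1 : (∫ x in Metric.closedBall (0 : EuclideanSpace ℝ (Fin (m+1))) T,
      Real.exp (δ * x 0)) = ∫ p in S, Real.exp (δ * p.1) := by
    rw [← (MeasurePreserving.symm _ (Phi_mp m)).setIntegral_preimage_emb
      (MeasurableEquiv.measurableEmbedding _) (fun x => Real.exp (δ * x 0)) _, hpre]
    exact setIntegral_congr_fun hS (fun p _ => by rw [hg])
  rw [step1]
  -- integrability
  have hsub : S ⊆ (Set.Icc (-T) T) ×ˢ (Metric.closedBall (0:EuclideanSpace ℝ (Fin m)) T) := by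
    rintro ⟨t, y⟩ hp
    simp only [hSdef, Set.mem_setOf_eq] at hp
    constructor
    · simp only [Set.mem_Icc]
      constructor <;> nlinarith [norm_nonneg y, sq_nonneg ‖y‖]
    · simp only [Metric.mem_closedBall, dist_zero_right]
      nlinarith [norm_nonneg y]
  have hfin : volume S ≠ ⊤ := by
    refine ne_top_of_le_ne_top ?_ (measure_mono hsub)
    rw [Measure.volume_eq_prod, Measure.prod_prod]
    exact (ENNReal.mul_lt_top measure_Icc_lt_top measure_closedBall_lt_top).ne
  have hint : IntegrableOn (fun p : ℝ × EuclideanSpace ℝ (Fin m) => Real.exp (δ * p.1)) S := by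
    apply Measure.integrableOn_of_bounded hfin
    · exact (Continuous.aestronglyMeasurable (by fun_prop))
    · filter_upwards [ae_restrict_mem hS] with p hp
      simp only [hSdef, Set.mem_setOf_eq] at hp
      have h1 : |p.1| ≤ T := by
        rw [abs_le]; constructor <;> nlinarith [sq_nonneg ‖p.2‖]
      rw [Real.norm_eq_abs, abs_of_pos (Real.exp_pos _)]
      apply Real.exp_le_exp.mpr
      calc δ * p.1 ≤ |δ * p.1| := le_abs_self _
        _ = |δ| * |p.1| := abs_mul _ _
        _ ≤ |δ| * T := mul_le_mul_of_nonneg_left h1 (abs_nonneg δ)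
  -- Fubini
  have step2 : (∫ p in S, Real.exp (δ * p.1))
      = ∫ t : ℝ, ∫ y : EuclideanSpace ℝ (Fin m),
          S.indicator (fun p => Real.exp (δ * p.1)) (t, y) := by
    rw [← integral_indicator hS]
    rw [Measure.volume_eq_prod]
    rw [Measure.volume_eq_prod] at hint
    exact integral_prod _ ((integrable_indicator_iff hS).mpr hint)
  rw [step2]
  -- inner integral
  have hinner : ∀ t : ℝ, (∫ y : EuclideanSpace ℝ (Fin m),
        S.indicator (fun p => Real.exp (δ * p.1)) (t, y))
      = (Set.Icc (-T) T).indicator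
          (fun t => Real.exp (δ*t) * (T^2 - t^2)^((m:ℝ)/2)) t * κ.toReal := by
    intro t
    by_cases ht : t ∈ Set.Icc (-T) T
    · obtain ⟨ht1, ht2⟩ := ht
      have hc : 0 ≤ T^2 - t^2 := by nlinarith
      have hAmeas : MeasurableSet {y : EuclideanSpace ℝ (Fin m) | ‖y‖^2 ≤ T^2 - t^2} := by
        apply IsClosed.measurableSet
        apply isClosed_le _ continuous_const
        fun_prop
      have heq : ∀ y : EuclideanSpace ℝ (Fin m),
          S.indicator (fun p => Real.exp (δ * p.1)) (t, y)
            = ({y : EuclideanSpace ℝ (Fin m) | ‖y‖^2 ≤ T^2 - t^2}).indicator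
                (fun _ => Real.exp (δ * t)) y := by
        intro y
        by_cases hy : y ∈ {y : EuclideanSpace ℝ (Fin m) | ‖y‖^2 ≤ T^2 - t^2}
        · rw [Set.indicator_of_mem hy, Set.indicator_of_mem]
          simp only [hSdef, Set.mem_setOf_eq] at hy ⊢
          linarith
        · rw [Set.indicator_of_notMem hy, Set.indicator_of_notMem]
          simp only [hSdef, Set.mem_setOf_eq] at hy ⊢
          intro h; exact hy (by linarith)
      simp_rw [heq]
      rw [integral_indicator_const _ hAmeas, measureReal_def, slice_vol m hc,
        Set.indicator_of_mem (Set.mem_Icc.mpr ⟨ht1, ht2⟩)]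
      rw [ENNReal.toReal_mul, ENNReal.toReal_ofReal (Real.rpow_nonneg hc _)]
      simp only [smul_eq_mul]
      ring
    · have htt : T^2 < t^2 := by
        rw [Set.mem_Icc] at ht
        push_neg at ht
        rcases le_or_gt (-T) t with h | h
        · have := ht h; nlinarith
        · nlinarith
      have heq : ∀ y : EuclideanSpace ℝ (Fin m),
          S.indicator (fun p => Real.exp (δ * p.1)) (t, y) = 0 := by
        intro y
        apply Set.indicator_of_notMem
        simp only [hSdef, Set.mem_setOf_eq]
        push_neg
        nlinarith [norm_nonneg y, sq_nonneg ‖y‖]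
      simp_rw [heq]
      rw [integral_zero, Set.indicator_of_notMem ht, zero_mul]
  simp_rw [hinner]
  rw [integral_mul_const, integral_indicator measurableSet_Icc,
    integral_Icc_eq_integral_Ioc,
    ← intervalIntegral.integral_of_le (by linarith : -T ≤ T), mul_comm]

lemma reduce (m : ℕ) (l : EuclideanSpace ℝ (Fin (m+1)) →ₗ[ℝ] ℝ) (hl : l ≠ 0) (δ : ℝ)
    (hδ : IsGreatest ((fun Y => l Y) '' Metric.closedBall (0 : EuclideanSpace ℝ (Fin (m+1))) 1) δ) :
    (0 < δ) ∧ ∃ R : EuclideanSpace ℝ (Fin (m+1)) ≃ₗᵢ[ℝ] EuclideanSpace ℝ (Fin (m+1)),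
      ∀ x, l (R x) = δ * x 0 := by
  set E := EuclideanSpace ℝ (Fin (m+1))
  set v : E := (InnerProductSpace.toDual ℝ E).symm (LinearMap.toContinuousLinearMap l) with hv
  have hvx : ∀ x : E, (inner ℝ v x : ℝ) = l x := by
    intro x
    rw [hv, InnerProductSpace.toDual_symm_apply]
    rfl
  have hvne : v ≠ 0 := by
    intro h
    apply hl
    ext x
    have := hvx x
    rw [h, inner_zero_left] at this
    exact this.symm
  have hvnorm : 0 < ‖v‖ := norm_pos_iff.mpr hvne
  set u : E := ‖v‖⁻¹ • v with hu
  have hun : ‖u‖ = 1 := norm_smul_inv_norm hvne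
  have hδv : δ = ‖v‖ := by
    apply le_antisymm
    · obtain ⟨y, hy, hly⟩ := hδ.1
      simp only at hly
      rw [← hly, ← hvx y]
      calc (inner ℝ v y : ℝ) ≤ ‖v‖ * ‖y‖ := real_inner_le_norm v y
        _ ≤ ‖v‖ * 1 := by
            apply mul_le_mul_of_nonneg_left _ (norm_nonneg v)
            simpa [Metric.mem_closedBall, dist_zero_right] using hy
        _ = ‖v‖ := mul_one _
    · have hmem : u ∈ Metric.closedBall (0:E) 1 := by
        simp [Metric.mem_closedBall, dist_zero_right, hun]
      have hlu : l u ≤ δ := hδ.2 ⟨u, hmem, rfl⟩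
      rw [← hvx u, hu, real_inner_smul_right, real_inner_self_eq_norm_sq] at hlu
      calc ‖v‖ = ‖v‖⁻¹ * (‖v‖ * ‖v‖) := by field_simp
        _ ≤ δ := by rw [← sq]; exact hlu
  have hδpos : 0 < δ := hδv ▸ hvnorm
  set w : E := EuclideanSpace.single (0 : Fin (m+1)) (1:ℝ) with hwdef
  have hwn : ‖w‖ = 1 := by rw [hwdef, EuclideanSpace.norm_single]; exact norm_one
  set R := (ℝ ∙ (w - u))ᗮ.reflection with hRdef
  refine ⟨hδpos, R, fun x => ?_⟩
  have hRw : R w = u := Submodule.reflection_sub (hwn.trans hun.symm)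
  have h1 : l (R x) = (inner ℝ v (R x) : ℝ) := (hvx _).symm
  rw [h1]
  have hvu : v = ‖v‖ • u := by rw [hu, smul_smul]; field_simp; rw [one_smul]
  rw [hvu, real_inner_smul_left, ← hRw, LinearIsometryEquiv.inner_map_map]
  have hwx : (inner ℝ w x : ℝ) = x 0 := by
    rw [hwdef, EuclideanSpace.inner_single_left]
    simp
  rw [hwx, hδv]

/-- For a nonzero linear functional `l` on `ℝ^r` with `δ = max_{‖Y‖ ≤ 1} l Y`,
there is `C > 0` with `∫_{B(0,T)} e^{l Y} dY ∼ C T^{(r-1)/2} e^{δ T}` as `T → ∞`. -/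
theorem stmt1 (r : ℕ) (l : EuclideanSpace ℝ (Fin r) →ₗ[ℝ] ℝ) (hl : l ≠ 0) (δ : ℝ)
    (hδ : IsGreatest ((fun Y => l Y) '' Metric.closedBall (0 : EuclideanSpace ℝ (Fin r)) 1) δ) :
    ∃ C : ℝ, 0 < C ∧
      Tendsto (fun T : ℝ =>
          (∫ Y in Metric.closedBall (0 : EuclideanSpace ℝ (Fin r)) T, Real.exp (l Y)) /
            (C * T ^ (((r : ℝ) - 1) / 2) * Real.exp (δ * T)))
        atTop (𝓝 1) := by
  obtain ⟨m, rfl⟩ : ∃ m, r = m + 1 := by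
    cases r with
    | zero =>
      exfalso
      apply hl
      haveI : Subsingleton (EuclideanSpace ℝ (Fin 0)) :=
        ⟨fun a b => PiLp.ext fun i => i.elim0⟩
      ext x
      rw [Subsingleton.elim x 0]
      simp
    | succ m => exact ⟨m, rfl⟩
  obtain ⟨hδpos, R, hR⟩ := reduce m l hl δ hδ
  set p : ℝ := (m:ℝ)/2 with hpdef
  have hp : 0 ≤ p := by positivity
  set κt := (volume (Metric.ball (0:EuclideanSpace ℝ (Fin m)) 1)).toReal with hκdef
  have hκpos : 0 < κt := ENNReal.toReal_pos (Metric.measure_ball_pos volume 0 one_pos).ne'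
    measure_ball_lt_top.ne
  set L := ∫ s in Set.Ioi (0:ℝ), Real.exp (-(δ*s)) * (2*s)^p with hLdef
  have hLpos : 0 < L := by
    rw [hLdef]
    rw [setIntegral_pos_iff_support_of_nonneg_ae]
    · refine lt_of_lt_of_le ?_ (measure_mono (fun s (hs : s ∈ Set.Ioi (0:ℝ)) =>
        ⟨ne_of_gt (mul_pos (Real.exp_pos _) (Real.rpow_pos_of_pos (by linarith [hs.out]) _)), hs⟩))
      simp
    · filter_upwards [ae_restrict_mem measurableSet_Ioi] with s hs
      have : (0:ℝ) < s := hs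
      positivity
    · exact bound_integrable δ p hδpos hp
  refine ⟨κt * L, by positivity, ?_⟩
  have hcore := core δ p hδpos hp
  have h2 := hcore.mul_const (κt/(κt*L))
  have hone : L * (κt/(κt*L)) = 1 := by field_simp
  rw [hone] at h2
  apply Tendsto.congr' _ h2
  filter_upwards [eventually_gt_atTop (0:ℝ)] with T hT
  -- transform the ball integral
  have hA : (∫ Y in Metric.closedBall (0:EuclideanSpace ℝ (Fin (m+1))) T, Real.exp (l Y))
      = ∫ x in Metric.closedBall (0:EuclideanSpace ℝ (Fin (m+1))) T, Real.exp (δ * x 0) := by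
    have hpre : ⇑R ⁻¹' (Metric.closedBall (0:EuclideanSpace ℝ (Fin (m+1))) T)
        = Metric.closedBall 0 T := by
      ext x
      simp [Metric.mem_closedBall, dist_zero_right]
    rw [← R.measurePreserving.setIntegral_preimage_emb
      (R.toHomeomorph.measurableEmbedding) (fun Y => Real.exp (l Y)) _, hpre]
    exact setIntegral_congr_fun measurableSet_closedBall (fun x _ => by rw [hR x])
  have hq : (((m:ℝ)+1)-1)/2 = p := by rw [hpdef]; ring
  rw [hA, slice_integral m δ T hT]
  push_cast
  rw [hq]
  have h1 : T ^ p ≠ 0 := (Real.rpow_pos_of_pos hT p).ne'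
  have h2 : Real.exp (δ*T) ≠ 0 := (Real.exp_pos _).ne'
  field_simp
  ring
end

section
/- Let $\lambda$ be a linear functional on $\mathbb{R}^r$, let $\delta = \max_{\|Y\| \leq 1} \lambda(Y) > 0$, and suppose the maximum of $\lambda$ on the unit sphere is attained at a unique point $Y_0$. Let $S \subset \mathbb{R}^r$ be an open convex cone containing $Y_0$. Then $\int_{B(0,T) \cap S} e^{\lambda(Y)}\, dY \sim \int_{B(0,T)} e^{\lambda(Y)}\, dY$ as $T \to \infty$. -/
open MeasureTheory Filter Topology

lemma aux_pow_exp (n : ℕ) {b : ℝ} (hb : b < 0) :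
    Tendsto (fun T : ℝ => T ^ n * Real.exp (b * T)) atTop (𝓝 0) := by
  have hb' : 0 < -b := neg_pos.2 hb
  have h1 : Tendsto (fun T : ℝ => -b * T) atTop atTop :=
    tendsto_id.const_mul_atTop hb'
  have h2 := (Real.tendsto_pow_mul_exp_neg_atTop_nhds_zero n).comp h1
  have h3 := h2.const_mul (((-b)⁻¹) ^ n)
  rw [mul_zero] at h3
  refine h3.congr fun T => ?_
  simp only [Function.comp]
  rw [mul_pow, show -(-b * T) = b * T from by ring]
  have hbn : (-b) ^ n ≠ 0 := pow_ne_zero _ (by linarith)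
  rw [← mul_assoc, ← mul_assoc, ← mul_pow, inv_mul_cancel₀ (by linarith : (-b) ≠ 0), one_pow, one_mul]

/-- If `δ = max_{‖Y‖ ≤ 1} l Y > 0` is attained on the unit sphere at a unique point `Y₀`,
and `S` is an open convex cone containing `Y₀`, then
`∫_{B(0,T) ∩ S} e^{l Y} dY ∼ ∫_{B(0,T)} e^{l Y} dY` as `T → ∞`. -/
theorem stmt2 (r : ℕ) (l : EuclideanSpace ℝ (Fin r) →ₗ[ℝ] ℝ) (δ : ℝ) (hδpos : 0 < δ)
    (hδ : IsGreatest ((fun Y => l Y) '' Metric.closedBall (0 : EuclideanSpace ℝ (Fin r)) 1) δ)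
    (Y₀ : EuclideanSpace ℝ (Fin r)) (hY₀ : ‖Y₀‖ = 1) (hlY₀ : l Y₀ = δ)
    (huniq : ∀ Y : EuclideanSpace ℝ (Fin r), ‖Y‖ = 1 → l Y = δ → Y = Y₀)
    (S : Set (EuclideanSpace ℝ (Fin r))) (hSopen : IsOpen S) (hSconv : Convex ℝ S)
    (hScone : ∀ Y ∈ S, ∀ c : ℝ, 0 < c → c • Y ∈ S) (hY₀S : Y₀ ∈ S) :
    Tendsto (fun T : ℝ =>
        (∫ Y in Metric.closedBall (0 : EuclideanSpace ℝ (Fin r)) T ∩ S, Real.exp (l Y)) /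
          (∫ Y in Metric.closedBall (0 : EuclideanSpace ℝ (Fin r)) T, Real.exp (l Y)))
      atTop (𝓝 1) := by
  classical
  set L : EuclideanSpace ℝ (Fin r) →L[ℝ] ℝ := LinearMap.toContinuousLinearMap l with hL
  have hLl : ∀ Y : EuclideanSpace ℝ (Fin r), L Y = l Y := fun Y => rfl
  have hcont : Continuous fun Y : EuclideanSpace ℝ (Fin r) => Real.exp (l Y) :=
    Real.continuous_exp.comp L.continuous
  -- the separation constant
  obtain ⟨δ', hδ'lt, hδ'⟩ : ∃ δ' < δ, ∀ u : EuclideanSpace ℝ (Fin r), ‖u‖ = 1 → u ∉ S → l u ≤ δ' := by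
    by_cases hK : (Metric.sphere (0 : EuclideanSpace ℝ (Fin r)) 1 ∩ Sᶜ).Nonempty
    · have hKc : IsCompact (Metric.sphere (0 : EuclideanSpace ℝ (Fin r)) 1 ∩ Sᶜ) :=
        (isCompact_sphere 0 1).inter_right hSopen.isClosed_compl
      obtain ⟨u₀, hu₀, hmax⟩ := hKc.exists_isMaxOn hK
        (L.continuous.continuousOn.congr (fun x _ => (hLl x).symm))
      refine ⟨l u₀, ?_, fun u hu huS => hmax ⟨by simpa using hu, huS⟩⟩
      have h1 : l u₀ ≤ δ := hδ.2 ⟨u₀, Metric.sphere_subset_closedBall hu₀.1, rfl⟩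
      rcases lt_or_eq_of_le h1 with h | h
      · exact h
      · have := huniq u₀ (by simpa using hu₀.1) h
        rw [this] at hu₀
        exact absurd hY₀S hu₀.2
    · exact ⟨δ - 1, by linarith, fun u hu huS =>
        absurd ⟨u, by simpa using hu, huS⟩ hK⟩
  set A : ℝ := max δ' 0 with hA
  have hAlt : A < δ := max_lt hδ'lt hδpos
  have hA0 : 0 ≤ A := le_max_right _ _
  -- pointwise bound off S
  have hbound : ∀ T : ℝ, 0 ≤ T → ∀ Y ∈ Metric.closedBall (0 : EuclideanSpace ℝ (Fin r)) T ∩ Sᶜ,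
      l Y ≤ A * T := by
    intro T hT Y hY
    rcases eq_or_ne Y 0 with rfl | hY0
    · simp only [map_zero]
      positivity
    · have hYn : 0 < ‖Y‖ := norm_pos_iff.2 hY0
      set u : EuclideanSpace ℝ (Fin r) := ‖Y‖⁻¹ • Y with hu
      have hun : ‖u‖ = 1 := by
        rw [hu, norm_smul, norm_inv, norm_norm, inv_mul_cancel₀ hYn.ne']
      have huS : u ∉ S := by
        intro h
        have h2 := hScone u h (‖Y‖) hYn
        rw [hu, smul_smul, mul_inv_cancel₀ hYn.ne', one_smul] at h2
        exact hY.2 h2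
      have hlu : l u ≤ δ' := hδ' u hun huS
      have hYu : l Y = ‖Y‖ * l u := by
        rw [hu, l.map_smul, smul_eq_mul, ← mul_assoc, mul_inv_cancel₀ hYn.ne', one_mul]
      rw [hYu]
      rcases le_or_gt 0 (l u) with h | h
      · calc ‖Y‖ * l u ≤ T * l u := by
              exact mul_le_mul_of_nonneg_right (by simpa using hY.1) h
          _ ≤ T * A := mul_le_mul_of_nonneg_left (hlu.trans (le_max_left _ _)) hT
          _ = A * T := mul_comm _ _
      · have : ‖Y‖ * l u ≤ 0 := mul_nonpos_of_nonneg_of_nonpos hYn.le h.le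
        calc ‖Y‖ * l u ≤ 0 := this
          _ ≤ A * T := by positivity
  -- notation
  set N : ℝ → ℝ := fun T => ∫ Y in Metric.closedBall (0 : EuclideanSpace ℝ (Fin r)) T ∩ Sᶜ, Real.exp (l Y) with hN
  set D : ℝ → ℝ := fun T => ∫ Y in Metric.closedBall (0 : EuclideanSpace ℝ (Fin r)) T, Real.exp (l Y) with hD
  have hSm : MeasurableSet S := hSopen.measurableSet
  have hint : ∀ T : ℝ, IntegrableOn (fun Y : EuclideanSpace ℝ (Fin r) => Real.exp (l Y))
      (Metric.closedBall (0 : EuclideanSpace ℝ (Fin r)) T) volume :=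
    fun T => hcont.continuousOn.integrableOn_compact (isCompact_closedBall 0 T)
  -- splitting
  have hsplit : ∀ T : ℝ, (∫ Y in Metric.closedBall (0 : EuclideanSpace ℝ (Fin r)) T ∩ S, Real.exp (l Y))
      = D T - N T := by
    intro T
    have h1 : IntegrableOn (fun Y : EuclideanSpace ℝ (Fin r) => Real.exp (l Y))
        (Metric.closedBall (0 : EuclideanSpace ℝ (Fin r)) T ∩ S) volume :=
      (hint T).mono_set Set.inter_subset_left
    have h2 : IntegrableOn (fun Y : EuclideanSpace ℝ (Fin r) => Real.exp (l Y))
        (Metric.closedBall (0 : EuclideanSpace ℝ (Fin r)) T ∩ Sᶜ) volume :=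
      (hint T).mono_set Set.inter_subset_left
    have hdisj : Disjoint (Metric.closedBall (0 : EuclideanSpace ℝ (Fin r)) T ∩ S)
        (Metric.closedBall (0 : EuclideanSpace ℝ (Fin r)) T ∩ Sᶜ) :=
      (disjoint_compl_right.mono Set.inter_subset_right Set.inter_subset_right)
    have hunion : (Metric.closedBall (0 : EuclideanSpace ℝ (Fin r)) T ∩ S) ∪ (Metric.closedBall (0 : EuclideanSpace ℝ (Fin r)) T ∩ Sᶜ)
        = Metric.closedBall (0 : EuclideanSpace ℝ (Fin r)) T := by
      rw [← Set.inter_union_distrib_left, Set.union_compl_self, Set.inter_univ]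
    have := setIntegral_union hdisj (measurableSet_closedBall.inter hSm.compl) h1 h2
    rw [hunion] at this
    simp only [hD, hN]
    linarith [this]
  -- upper bound on N
  have hNle : ∀ T : ℝ, 0 ≤ T → N T ≤
      (volume (Metric.closedBall (0 : EuclideanSpace ℝ (Fin r)) T)).toReal * Real.exp (A * T) := by
    intro T hT
    have hfin : volume (Metric.closedBall (0 : EuclideanSpace ℝ (Fin r)) T ∩ Sᶜ) < ⊤ := by
      refine lt_of_le_of_lt (measure_mono Set.inter_subset_left) ?_
      exact measure_closedBall_lt_top
    have := norm_setIntegral_le_of_norm_le_const_ae' (f := fun Y => Real.exp (l Y)) (C := Real.exp (A * T)) hfin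
      (Filter.Eventually.of_forall (fun Y (hY : Y ∈ _) => by
        rw [Real.norm_eq_abs, abs_of_pos (Real.exp_pos _)]
        exact Real.exp_le_exp.2 (hbound T hT Y hY)))
    refine le_trans (le_trans (le_abs_self _) this) ?_
    rw [mul_comm]
    refine mul_le_mul_of_nonneg_right ?_ (Real.exp_pos _).le
    refine ENNReal.toReal_mono ?_ (measure_mono Set.inter_subset_left)
    exact measure_closedBall_lt_top.ne
  -- lower bound on D
  set C : ℝ := ‖L‖ with hC
  set c : ℝ := (volume (Metric.ball (0 : EuclideanSpace ℝ (Fin r)) 1)).toReal with hc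
  have hcpos : 0 < c := ENNReal.toReal_pos
    (Metric.measure_ball_pos _ _ one_pos).ne' measure_ball_lt_top.ne
  have hDge : ∀ T : ℝ, 1 ≤ T → c * Real.exp (δ * T - δ - C) ≤ D T := by
    intro T hT
    set w : EuclideanSpace ℝ (Fin r) := (T - 1) • Y₀ with hw
    have hsub : Metric.closedBall w 1 ⊆ Metric.closedBall (0 : EuclideanSpace ℝ (Fin r)) T := by
      intro Y hY
      rw [Metric.mem_closedBall] at hY ⊢
      have h1 : dist Y 0 ≤ dist Y w + dist w 0 := dist_triangle _ _ _
      have h2 : dist w 0 = T - 1 := by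
        rw [dist_zero_right, hw, norm_smul, hY₀, mul_one, Real.norm_eq_abs,
          abs_of_nonneg (by linarith)]
      linarith
    have hlow : ∀ Y ∈ Metric.closedBall w 1, δ * T - δ - C ≤ l Y := by
      intro Y hY
      have h1 : l Y = l w + l (Y - w) := by rw [map_sub]; ring
      have h2 : l w = (T - 1) * δ := by
        rw [hw, l.map_smul, smul_eq_mul, hlY₀]
      have h3 : |l (Y - w)| ≤ C := by
        calc |l (Y - w)| = ‖L (Y - w)‖ := by rw [Real.norm_eq_abs, hLl]
          _ ≤ C * ‖Y - w‖ := L.le_opNorm _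
          _ ≤ C * 1 := by
              refine mul_le_mul_of_nonneg_left ?_ (norm_nonneg _)
              rw [← dist_eq_norm]; exact hY
          _ = C := mul_one _
      have h4 : -C ≤ l (Y - w) := neg_le_of_abs_le h3
      rw [h1, h2]; nlinarith
    calc c * Real.exp (δ * T - δ - C)
        = Real.exp (δ * T - δ - C) * (volume (Metric.closedBall w 1)).toReal := by
          rw [hc, Measure.addHaar_closedBall _ w (zero_le_one)]
          simp [ENNReal.toReal_mul]
          ring
      _ ≤ ∫ Y in Metric.closedBall w 1, Real.exp (l Y) := by
          refine setIntegral_ge_of_const_le_real measurableSet_closedBall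
            measure_closedBall_lt_top.ne
            (fun Y hY => Real.exp_le_exp.2 (hlow Y hY)) ?_
          exact hcont.continuousOn.integrableOn_compact (isCompact_closedBall _ _)
      _ ≤ D T := by
          refine setIntegral_mono_set (hint T) ?_ (HasSubset.Subset.eventuallyLE hsub)
          exact Filter.Eventually.of_forall (fun Y => (Real.exp_pos _).le)
  have hDpos : ∀ T : ℝ, 1 ≤ T → 0 < D T := fun T hT =>
    lt_of_lt_of_le (by positivity) (hDge T hT)
  have hNnonneg : ∀ T : ℝ, 0 ≤ N T :=
    fun T => setIntegral_nonneg (measurableSet_closedBall.inter hSm.compl)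
      (fun Y _ => (Real.exp_pos _).le)
  -- the dominating function
  set g : ℝ → ℝ := fun T => Real.exp (δ + C) * (T ^ r * Real.exp ((A - δ) * T)) with hg
  have hg0 : Tendsto g atTop (𝓝 0) := by
    have := (aux_pow_exp r (by linarith : A - δ < 0)).const_mul (Real.exp (δ + C))
    rw [mul_zero] at this
    exact this
  -- N/D squeezed
  have hND : Tendsto (fun T => N T / D T) atTop (𝓝 0) := by
    refine tendsto_of_tendsto_of_tendsto_of_le_of_le' tendsto_const_nhds hg0 ?_ ?_
    · filter_upwards [eventually_ge_atTop (1 : ℝ)] with T hT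
      exact div_nonneg (hNnonneg T) (hDpos T hT).le
    · filter_upwards [eventually_ge_atTop (1 : ℝ)] with T hT
      have hT0 : (0 : ℝ) ≤ T := by linarith
      have h1 : N T ≤ c * T ^ r * Real.exp (A * T) := by
        refine le_trans (hNle T hT0) ?_
        rw [Measure.addHaar_closedBall _ (0 : EuclideanSpace ℝ (Fin r)) hT0, hc,
          ENNReal.toReal_mul, ENNReal.toReal_ofReal (by positivity),
          finrank_euclideanSpace_fin]
        ring_nf
        exact le_refl _
      have h2 := hDge T hT
      have hgT0 : 0 ≤ g T := by
        rw [hg]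
        exact mul_nonneg (Real.exp_pos _).le
          (mul_nonneg (pow_nonneg hT0 r) (Real.exp_pos _).le)
      have e : Real.exp (δ + C) * (Real.exp ((A - δ) * T) * Real.exp (δ * T - δ - C))
          = Real.exp (A * T) := by
        rw [← Real.exp_add, ← Real.exp_add]; ring_nf
      have key : g T * (c * Real.exp (δ * T - δ - C)) = c * T ^ r * Real.exp (A * T) := by
        rw [hg, ← e]; ring
      rw [div_le_iff₀ (hDpos T hT)]
      calc N T ≤ c * T ^ r * Real.exp (A * T) := h1
        _ = g T * (c * Real.exp (δ * T - δ - C)) := key.symm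
        _ ≤ g T * D T := mul_le_mul_of_nonneg_left h2 hgT0
  -- conclude
  have hfinal : Tendsto (fun T => 1 - N T / D T) atTop (𝓝 1) := by
    have := (tendsto_const_nhds (x := (1 : ℝ)) (f := atTop)).sub hND
    simpa using this
  refine hfinal.congr' ?_
  filter_upwards [eventually_ge_atTop (1 : ℝ)] with T hT
  rw [hsplit T, sub_div, div_self (hDpos T hT).ne']
end

section
/- Let $G$ be a locally compact group with Haar measure $m$, $H$ a closed subgroup with left Haar measure $\lambda$, and $\Delta: N_G(H) \to \mathbb{R}_+$ the homomorphism satisfying $\lambda(n A n^{-1}) = \Delta(n)\lambda(A)$ for Borel $A \subset H$. Suppose for all $g_1, g_2 \in G$ the limit $\alpha(g_1,g_2) = \lim_{T\to\infty} \lambda(H_T[g_1^{-1},g_2])/\lambda(H_T)$ exists and is positive and finite. Then for every $h \in H$, $n \in N_G(H)$, and $g_1, g_2 \in G$: $\alpha(n h g_1, n g_2) = \Delta(n)\,\alpha(g_1, g_2)$. In particular, for $h_1, h_2 \in H$: $\alpha(h_1 g_1, h_2 g_2) = \Delta(h_2)\,\alpha(g_1, g_2)$. -/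
open MeasureTheory Filter Topology

/-- Equivariance of the limit volume ratios `α` under the normalizer of `H`:
if `Δ : N_G(H) → ℝ₊` satisfies `λ(n A n⁻¹) = Δ(n) λ(A)` and the limits
`α(g₁,g₂) = lim_T λ(H_T[g₁⁻¹,g₂])/λ(H_T)` exist, positive and finite, then
`α(nhg₁, ng₂) = Δ(n) α(g₁,g₂)` for `h ∈ H`, `n ∈ N_G(H)`; in particular
`α(h₁g₁, h₂g₂) = Δ(h₂) α(g₁,g₂)` for `h₁, h₂ ∈ H`. -/
theorem stmt9 {G : Type*} [Group G] [TopologicalSpace G] [IsTopologicalGroup G]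
    (H : Subgroup G) [MeasurableSpace ↥H] (lam : Measure ↥H) [lam.IsMulLeftInvariant]
    (D : G → ℝ) (hDcont : Continuous D) (hDproper : Tendsto D (cocompact G) atTop)
    (Δ : G → ℝ)
    (hΔ : ∀ n ∈ Subgroup.normalizer (H : Set G), ∀ A : Set ↥H,
      (lam {h : ↥H | ∃ a ∈ A, (h : G) = n * ↑a * n⁻¹}).toReal = Δ n * (lam A).toReal)
    (α : G → G → ℝ)
    (hα : ∀ g₁ g₂ : G,
      Tendsto (fun T : ℝ =>
          (lam {h : ↥H | D (g₁⁻¹ * ↑h * g₂) < T}).toReal /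
            (lam {h : ↥H | D (↑h) < T}).toReal)
        atTop (𝓝 (α g₁ g₂)))
    (hαpos : ∀ g₁ g₂ : G, 0 < α g₁ g₂) :
    (∀ h ∈ H, ∀ n ∈ Subgroup.normalizer (H : Set G), ∀ g₁ g₂ : G,
        α (n * h * g₁) (n * g₂) = Δ n * α g₁ g₂) ∧
    (∀ h₁ ∈ H, ∀ h₂ ∈ H, ∀ g₁ g₂ : G,
        α (h₁ * g₁) (h₂ * g₂) = Δ h₂ * α g₁ g₂) := by
  -- Either `lam = 0`, or every left translation on `H` is a.e.-measurable.
  have hcases : lam = 0 ∨ ∀ g : ↥H, AEMeasurable (fun x : ↥H => g * x) lam := by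
    by_cases h0 : lam = 0
    · exact Or.inl h0
    · refine Or.inr fun g => ?_
      by_contra hna
      have hmap := map_mul_left_eq_self lam g
      rw [Measure.map_of_not_aemeasurable hna] at hmap
      exact h0 hmap.symm
  have key : ∀ h ∈ H, ∀ n ∈ Subgroup.normalizer (H : Set G), ∀ g₁ g₂ : G,
      α (n * h * g₁) (n * g₂) = Δ n * α g₁ g₂ := by
    rcases hcases with h0 | hmeas
    · -- degenerate case: all limits are zero
      have hz : ∀ x y : G, α x y = 0 := by
        intro x y
        refine tendsto_nhds_unique (hα x y) ?_
        have : (fun T : ℝ =>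
            (lam {h : ↥H | D (x⁻¹ * ↑h * y) < T}).toReal /
              (lam {h : ↥H | D (↑h) < T}).toReal) = fun _ => (0 : ℝ) := by
          funext T; simp [h0]
        rw [this]
        exact tendsto_const_nhds
      intro h hh n hn g₁ g₂
      rw [hz, hz, mul_zero]
    · intro h hh n hn g₁ g₂
      set hH : ↥H := ⟨h, hh⟩ with hHdef
      have hnum : ∀ T : ℝ,
          (lam {k : ↥H | D ((n * h * g₁)⁻¹ * ↑k * (n * g₂)) < T}).toReal
            = Δ n * (lam {m : ↥H | D (g₁⁻¹ * ↑m * g₂) < T}).toReal := by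
        intro T
        set S : Set ↥H := {m : ↥H | D (g₁⁻¹ * ↑m * g₂) < T} with hSdef
        have hset : {k : ↥H | D ((n * h * g₁)⁻¹ * ↑k * (n * g₂)) < T}
            = {k : ↥H | ∃ a ∈ (fun m : ↥H => hH * m) '' S, (k : G) = n * ↑a * n⁻¹} := by
          ext k
          simp only [Set.mem_setOf_eq, Set.mem_image]
          constructor
          · intro hk
            have hmem : n⁻¹ * (k : G) * n ∈ H := by
              have := (Subgroup.mem_normalizer_iff.mp hn (n⁻¹ * (k : G) * n)).mpr
              have e : n * (n⁻¹ * (k : G) * n) * n⁻¹ = (k : G) := by group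
              rw [e] at this
              exact this k.2
            refine ⟨hH * (hH⁻¹ * ⟨n⁻¹ * (k : G) * n, hmem⟩),
              ⟨hH⁻¹ * ⟨n⁻¹ * (k : G) * n, hmem⟩, ?_, rfl⟩, ?_⟩
            · show D (g₁⁻¹ * ↑(hH⁻¹ * (⟨n⁻¹ * (k : G) * n, hmem⟩ : ↥H)) * g₂) < T
              have e : g₁⁻¹ * ((h : G)⁻¹ * (n⁻¹ * (k : G) * n)) * g₂
                  = (n * h * g₁)⁻¹ * ↑k * (n * g₂) := by group
              simpa [hHdef, e] using hk
            · push_cast [hHdef]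
              group
          · rintro ⟨a, ⟨m, hm, rfl⟩, hka⟩
            have hka' : (k : G) = n * (h * (m : G)) * n⁻¹ := by
              simpa [hHdef] using hka
            rw [hka']
            have e : (n * h * g₁)⁻¹ * (n * (h * (m : G)) * n⁻¹) * (n * g₂)
                = g₁⁻¹ * (m : G) * g₂ := by group
            rw [e]
            exact hm
        have hΔ' := hΔ n hn ((fun m : ↥H => hH * m) '' S)
        have himg : lam ((fun m : ↥H => hH * m) '' S) = lam S := by
          have e1 : (fun m : ↥H => hH⁻¹ * m) ⁻¹' S = (fun m : ↥H => hH * m) '' S := by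
            ext x
            simp only [Set.mem_image, Set.mem_preimage]
            constructor
            · intro hx; exact ⟨hH⁻¹ * x, hx, by group⟩
            · rintro ⟨m, hm, rfl⟩; simpa using hm
          have e2 : (fun m : ↥H => hH * m) ⁻¹' ((fun m : ↥H => hH * m) '' S) = S :=
            Set.preimage_image_eq S (fun a b hab => by
              simpa using mul_left_cancel hab)
          have le1 : lam ((fun m : ↥H => hH * m) '' S) ≤ lam S := by
            rw [← e1]
            calc lam ((fun m : ↥H => hH⁻¹ * m) ⁻¹' S)
                ≤ (lam.map (fun m : ↥H => hH⁻¹ * m)) S :=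
                  Measure.le_map_apply (hmeas hH⁻¹) S
              _ = lam S := by
                  rw [map_mul_left_eq_self lam hH⁻¹]
          have le2 : lam S ≤ lam ((fun m : ↥H => hH * m) '' S) := by
            calc lam S
                = lam ((fun m : ↥H => hH * m) ⁻¹' ((fun m : ↥H => hH * m) '' S)) := by
                  rw [e2]
              _ ≤ (lam.map (fun m : ↥H => hH * m)) ((fun m : ↥H => hH * m) '' S) :=
                  Measure.le_map_apply (hmeas hH) _
              _ = lam ((fun m : ↥H => hH * m) '' S) := by
                  rw [map_mul_left_eq_self lam hH]
          exact le_antisymm le1 le2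
        rw [hset, hΔ', himg]
      have h1 : Tendsto (fun T : ℝ =>
          (lam {k : ↥H | D ((n * h * g₁)⁻¹ * ↑k * (n * g₂)) < T}).toReal /
            (lam {k : ↥H | D (↑k) < T}).toReal) atTop (𝓝 (Δ n * α g₁ g₂)) := by
        have := (hα g₁ g₂).const_mul (Δ n)
        refine this.congr fun T => ?_
        rw [hnum T, mul_div_assoc]
      exact tendsto_nhds_unique (hα (n * h * g₁) (n * g₂)) h1
  refine ⟨key, fun h₁ hh₁ h₂ hh₂ g₁ g₂ => ?_⟩
  have := key (h₂⁻¹ * h₁) (H.mul_mem (H.inv_mem hh₂) hh₁) h₂ (H.le_normalizer hh₂) g₁ g₂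
  rw [show h₂ * (h₂⁻¹ * h₁) * g₁ = h₁ * g₁ by group] at this
  exact this
end

section
/- Let $G$ be a locally compact second countable group, $\Gamma$ a lattice in $G$ with Haar measure $m$ normalized so the quotient has measure 1, and $D$ a continuous proper function on $G$ with $G_T = \{g : D(g) < T\}$, $\Gamma_T = \Gamma \cap G_T$. Assume: (I1) for every $\varepsilon > 0$ there are $\delta > 0$ and $T_0$ with $m(G_{(1+\delta)T}) \leq (1+\varepsilon)m(G_T)$ for $T > T_0$; (UC) for every $\varepsilon > 0$ there is a neighborhood $\mathcal{U}$ of $e$ with $D(gu) < (1+\varepsilon)D(g)$ for all $g, u \in G \times \mathcal{U}$; and the equidistribution property: for every $F \in C_c(G/\Gamma)$, $\frac{1}{m(G_T)}\int_{G_T} F(g^{-1}\pi(e))\,dm(g) \to \int_{G/\Gamma} F\,dm'$ as $T \to \infty$. Then $\#\Gamma_T \sim m(G_T)$ as $T \to \infty$. -/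
open MeasureTheory Filter Topology Set Function Pointwise

section AuxStmt13

variable {G : Type*} [Group G] [TopologicalSpace G] [IsTopologicalGroup G]

/-- A discrete subgroup meets every compact set in a finite set. -/
lemma stmt13_aux_discrete_finite (Γ : Subgroup G) [DiscreteTopology Γ] {C : Set G}
    (hC : IsCompact C) : {γ : Γ | (γ : G) ∈ C}.Finite := by
  obtain ⟨W, hWopen, hW⟩ : ∃ W : Set G, IsOpen W ∧ (Subtype.val ⁻¹' W : Set Γ) = {1} := by
    have h : IsOpen ({1} : Set Γ) := isOpen_discrete _
    rw [isOpen_induced_iff] at h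
    obtain ⟨W, hWo, hWe⟩ := h
    exact ⟨W, hWo, hWe⟩
  have hW1 : (1 : G) ∈ W := by
    have : (1 : Γ) ∈ (Subtype.val ⁻¹' W : Set Γ) := by rw [hW]; rfl
    exact this
  obtain ⟨V, hV, hVsplit⟩ := exists_nhds_split_inv (hWopen.mem_nhds hW1)
  obtain ⟨O, hOV, hOopen, hO1⟩ := mem_nhds_iff.mp hV
  obtain ⟨t, _htC, htcover⟩ := hC.elim_nhds_subcover (fun x => (fun v => v * x) '' O)
    (fun x _ => ((isOpenMap_mul_right x) O hOopen).mem_nhds ⟨1, hO1, one_mul x⟩)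
  have hsub : ∀ x : G, {γ : Γ | (γ : G) ∈ (fun v => v * x) '' O}.Subsingleton := by
    intro x γ₁ h₁ γ₂ h₂
    obtain ⟨v₁, hv₁, he₁⟩ := h₁
    obtain ⟨v₂, hv₂, he₂⟩ := h₂
    have hmem : ((γ₁ * γ₂⁻¹ : Γ) : G) ∈ W := by
      have : (γ₁ : G) * (γ₂ : G)⁻¹ = v₁ / v₂ := by
        rw [← he₁, ← he₂, div_eq_mul_inv]; group
      push_cast
      rw [this]
      exact hVsplit v₁ (hOV hv₁) v₂ (hOV hv₂)
    have : (γ₁ * γ₂⁻¹ : Γ) ∈ (Subtype.val ⁻¹' W : Set Γ) := hmem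
    rw [hW] at this
    have h1 : γ₁ * γ₂⁻¹ = 1 := this
    exact mul_inv_eq_one.mp h1
  refine Set.Finite.subset (Set.Finite.biUnion t.finite_toSet
    (fun x _ => (hsub x).finite)) ?_
  intro γ hγ
  have := htcover hγ
  rw [Set.mem_iUnion₂] at this
  obtain ⟨x, hx, hmem⟩ := this
  exact Set.mem_biUnion hx hmem

/-- Periodization of a compactly supported continuous function over a discrete
subgroup gives a continuous compactly supported function on the quotient. -/
lemma stmt13_exists_quotient_function [LocallyCompactSpace G]
    (Γ : Subgroup G) [DiscreteTopology Γ] {f : G → ℝ}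
    (hfc : Continuous f) (hfs : HasCompactSupport f) :
    ∃ F : G ⧸ Γ → ℝ, (∀ g : G, F (QuotientGroup.mk g) = ∑' γ : Γ, f (g * γ)) ∧
      Continuous F ∧ HasCompactSupport F := by
  set K := tsupport f with hK
  have hKc : IsCompact K := hfs
  have key : ∀ (a : G) (γ₀ : Γ), (∑' γ : Γ, f (a * γ₀ * γ)) = ∑' γ : Γ, f (a * γ) := by
    intro a γ₀
    have h := Equiv.tsum_eq (Equiv.mulLeft γ₀) (fun γ : Γ => f (a * γ))
    rw [← h]
    exact tsum_congr fun γ => by push_cast [Equiv.coe_mulLeft]; rw [mul_assoc]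
  have hinv : ∀ (a b : G), @Setoid.r G (QuotientGroup.leftRel Γ) a b →
      (∑' γ : Γ, f (a * γ)) = ∑' γ : Γ, f (b * γ) := by
    intro a b hab
    have hab' : a⁻¹ * b ∈ Γ := QuotientGroup.leftRel_apply.mp hab
    have h := key a ⟨a⁻¹ * b, hab'⟩
    simpa [mul_inv_cancel_left] using h.symm
  refine ⟨fun x => Quotient.liftOn' x (fun g => ∑' γ : Γ, f (g * γ)) hinv, fun g => rfl, ?_, ?_⟩
  · -- Continuity
    rw [(QuotientGroup.isQuotientMap_mk Γ).continuous_iff]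
    show Continuous fun g : G => ∑' γ : Γ, f (g * γ)
    rw [continuous_iff_continuousAt]
    intro g₀
    obtain ⟨L, hLc, hLn⟩ := exists_compact_mem_nhds g₀
    have hfin : {γ : Γ | (γ : G) ∈ L⁻¹ * K}.Finite :=
      stmt13_aux_discrete_finite Γ (hLc.inv.mul hKc)
    have hEq : ∀ g ∈ L, (∑' γ : Γ, f (g * γ)) = ∑ γ ∈ hfin.toFinset, f (g * γ) := by
      intro g hg
      refine tsum_eq_sum fun γ hγ => ?_
      by_contra h0
      apply hγ
      rw [Set.Finite.mem_toFinset]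
      exact ⟨g⁻¹, Set.inv_mem_inv.mpr hg, g * γ, subset_tsupport f h0, by group⟩
    have hcs : ContinuousAt (fun g => ∑ γ ∈ hfin.toFinset, f (g * γ)) g₀ :=
      (continuous_finset_sum hfin.toFinset fun γ _ =>
        hfc.comp (continuous_id.mul continuous_const)).continuousAt
    exact hcs.congr (Filter.eventuallyEq_of_mem hLn hEq).symm
  · -- compact support
    have hsub : support (fun x : G ⧸ Γ =>
        Quotient.liftOn' x (fun g => ∑' γ : Γ, f (g * γ)) hinv) ⊆
        QuotientGroup.mk '' K := by
      intro x hx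
      obtain ⟨g, rfl⟩ := QuotientGroup.mk_surjective x
      have hFx : (∑' γ : Γ, f (g * γ)) ≠ 0 := hx
      have : ∃ γ : Γ, f (g * γ) ≠ 0 := by
        by_contra h
        push_neg at h
        apply hFx
        have h2 : (fun γ : Γ => f (g * γ)) = 0 := funext h
        rw [h2]
        exact tsum_zero
      obtain ⟨γ, hγ⟩ := this
      exact ⟨g * γ, subset_tsupport f hγ, QuotientGroup.mk_mul_of_mem g γ.2⟩
    have lf : LocallyFinite (fun γ : Γ => (fun x => x * (γ : G)) '' K) := by
      intro x
      obtain ⟨L, hLc, hLn⟩ := exists_compact_mem_nhds x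
      refine ⟨L, hLn, ?_⟩
      apply Set.Finite.subset (stmt13_aux_discrete_finite Γ (hKc.inv.mul hLc))
      rintro γ ⟨y, ⟨⟨k, hk, rfl⟩, hyL⟩⟩
      exact ⟨k⁻¹, Set.inv_mem_inv.mpr hk, k * γ, hyL, by group⟩
    have hclosedU : IsClosed (⋃ γ : Γ, (fun x => x * (γ : G)) '' K) :=
      lf.isClosed_iUnion fun γ =>
        (Homeomorph.mulRight (γ : G)).isClosedMap K (isClosed_tsupport f)
    have hpre : QuotientGroup.mk ⁻¹' (QuotientGroup.mk '' K : Set (G ⧸ Γ)) =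
        ⋃ γ : Γ, (fun x => x * (γ : G)) '' K := by
      ext x
      constructor
      · rintro ⟨k, hk, hkx⟩
        have h2 : k⁻¹ * x ∈ Γ := QuotientGroup.eq.mp hkx
        exact Set.mem_iUnion.mpr ⟨⟨k⁻¹ * x, h2⟩, ⟨k, hk, by simp [mul_inv_cancel_left]⟩⟩
      · intro hx
        obtain ⟨γ, k, hk, rfl⟩ := Set.mem_iUnion.mp hx
        exact ⟨k, hk, (QuotientGroup.mk_mul_of_mem k γ.2).symm⟩
    have hclosed : IsClosed (QuotientGroup.mk '' K : Set (G ⧸ Γ)) := by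
      rw [← (QuotientGroup.isQuotientMap_mk Γ).isClosed_preimage, hpre]
      exact hclosedU
    exact IsCompact.of_isClosed_subset
      (hKc.image (QuotientGroup.isQuotientMap_mk Γ).continuous)
      (isClosed_tsupport _)
      (closure_minimal hsub hclosed)

end AuxStmt13

set_option maxHeartbeats 1000000 in
/-- Lattice point counting: if `Γ` is a lattice in a locally compact second countable
group `G` (with Haar measure `m` normalized so that the quotient `G/Γ` has an induced
probability measure `m'`), `D` is a continuous proper function on `G` with balls
`G_T = {D < T}` satisfying conditions I1 and UC, and Haar averages over `G_T` of
`F(π(g⁻¹))` equidistribute towards `∫ F dm'` for every compactly supported continuous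
`F` on `G/Γ`, then `#Γ_T ∼ m(G_T)` as `T → ∞`. -/
theorem stmt13 {G : Type*} [Group G] [TopologicalSpace G] [IsTopologicalGroup G]
    [LocallyCompactSpace G] [SecondCountableTopology G] [MeasurableSpace G] [BorelSpace G]
    (m : Measure G) [m.IsHaarMeasure]
    (Γ : Subgroup G) [DiscreteTopology Γ]
    (m' : Measure (G ⧸ Γ)) [IsProbabilityMeasure m']
    (hcompat : ∀ f : G → ℝ, Continuous f → HasCompactSupport f →
      ∀ F : G ⧸ Γ → ℝ, (∀ g : G, F (QuotientGroup.mk g) = ∑' γ : Γ, f (g * γ)) →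
        ∫ g, f g ∂m = ∫ x, F x ∂m')
    (D : G → ℝ) (hDcont : Continuous D) (hDproper : Tendsto D (cocompact G) atTop)
    (hI1 : ∀ ε : ℝ, 0 < ε → ∃ δ : ℝ, 0 < δ ∧ ∃ T₀ : ℝ, ∀ T > T₀,
      (m {g : G | D g < (1 + δ) * T}).toReal ≤ (1 + ε) * (m {g : G | D g < T}).toReal)
    (hUC : ∀ ε : ℝ, 0 < ε → ∃ U ∈ 𝓝 (1 : G), ∀ g u : G, u ∈ U →
      D (g * u) < (1 + ε) * D g)
    (hequi : ∀ F : G ⧸ Γ → ℝ, Continuous F → HasCompactSupport F →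
      Tendsto (fun T : ℝ =>
          (∫ g in {g : G | D g < T}, F (QuotientGroup.mk g⁻¹) ∂m) /
            (m {g : G | D g < T}).toReal)
        atTop (𝓝 (∫ x, F x ∂m'))) :
    Tendsto (fun T : ℝ =>
        (Nat.card {γ : Γ | D ↑γ < T} : ℝ) / (m {g : G | D g < T}).toReal)
      atTop (𝓝 1) := by
  classical
  -- basic facts about the balls
  have hGTopen : ∀ T : ℝ, IsOpen {g : G | D g < T} := fun T =>
    IsOpen.preimage hDcont isOpen_Iio
  have hGTmeas : ∀ T : ℝ, MeasurableSet {g : G | D g < T} := fun T =>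
    (hGTopen T).measurableSet
  have hcompactGT : ∀ T : ℝ, ∃ K : Set G, IsCompact K ∧ {g : G | D g < T} ⊆ K := by
    intro T
    have h := hDproper.eventually (eventually_ge_atTop T)
    obtain ⟨K, hKc, hK⟩ := mem_cocompact.mp h
    refine ⟨K, hKc, fun g hg => ?_⟩
    by_contra hgK
    have h2 : T ≤ D g := hK hgK
    exact absurd h2 (not_le.mpr hg)
  have hMne : ∀ T : ℝ, m {g : G | D g < T} ≠ ⊤ := by
    intro T
    obtain ⟨K, hKc, hKsub⟩ := hcompactGT T
    exact ((measure_mono hKsub).trans_lt hKc.measure_lt_top).ne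
  have hMpos : ∀ T : ℝ, D 1 < T → 0 < (m {g : G | D g < T}).toReal := by
    intro T hT
    exact ENNReal.toReal_pos ((hGTopen T).measure_pos m ⟨1, hT⟩).ne' (hMne T)
  have hNfin : ∀ T : ℝ, {γ : Γ | D (γ : G) < T}.Finite := by
    intro T
    obtain ⟨K, hKc, hKsub⟩ := hcompactGT T
    exact (stmt13_aux_discrete_finite Γ hKc).subset fun γ hγ => hKsub hγ
  have hcard : ∀ T : ℝ, (Nat.card {γ : Γ | D (γ : G) < T} : ℝ) = ((hNfin T).toFinset.card : ℝ) := by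
    intro T
    rw [Nat.card_coe_set_eq, Set.ncard_eq_toFinset_card _ (hNfin T)]
  -- main ε-argument
  rw [Metric.tendsto_nhds]
  intro ε hε
  obtain ⟨ε₁, hε₁, hε₁le, hε₁le2⟩ : ∃ ε₁ : ℝ, 0 < ε₁ ∧ ε₁ ≤ ε / 4 ∧ ε₁ ≤ 1 / 2 :=
    ⟨min (ε / 4) (1 / 2), lt_min (by linarith) one_half_pos, min_le_left _ _, min_le_right _ _⟩
  obtain ⟨δ, hδ, T₀, hT₀⟩ := hI1 ε₁ hε₁
  have h1δ : (0 : ℝ) < 1 + δ := by linarith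
  obtain ⟨U, hU, hUprop⟩ := hUC δ hδ
  have hVmem : U ∩ U⁻¹ ∈ 𝓝 (1 : G) := Filter.inter_mem hU (inv_mem_nhds_one G hU)
  have hVprop : ∀ x ∈ U ∩ U⁻¹,
      (∀ g, D (g * x) < (1 + δ) * D g) ∧ (∀ g, D (g * x⁻¹) < (1 + δ) * D g) :=
    fun x hx => ⟨fun g => hUprop g x hx.1, fun g => hUprop g x⁻¹ (Set.mem_inv.mp hx.2)⟩
  -- the bump function
  obtain ⟨fb, hfb1, hfb0, hfbs, hfbicc⟩ := exists_continuous_one_zero_of_isCompact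
    (isCompact_singleton : IsCompact ({1} : Set G))
    (isOpen_interior.isClosed_compl)
    (Set.disjoint_singleton_left.mpr
      (fun hmem => hmem (mem_interior_iff_mem_nhds.mpr hVmem)))
  have hfc : Continuous (fb : G → ℝ) := fb.continuous
  have hf0 : ∀ x, 0 ≤ (fb : G → ℝ) x := fun x => (hfbicc x).1
  have hf1 : (fb : G → ℝ) 1 = 1 := hfb1 rfl
  have hfV : ∀ x, (fb : G → ℝ) x ≠ 0 → x ∈ U ∩ U⁻¹ := by
    intro x hx
    by_contra h
    exact hx (hfb0 fun hmem => h (interior_subset hmem))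
  -- the reflected bump function
  have hfvc : Continuous (fun g : G => (fb : G → ℝ) g⁻¹) := hfc.comp continuous_inv
  have hfvs : HasCompactSupport (fun g : G => (fb : G → ℝ) g⁻¹) :=
    hfbs.comp_homeomorph (Homeomorph.inv G)
  have hfv0 : ∀ x, 0 ≤ (fb : G → ℝ) x⁻¹ := fun x => hf0 _
  have hfvV : ∀ x : G, (fb : G → ℝ) x⁻¹ ≠ 0 → x ∈ U ∩ U⁻¹ := by
    intro x hx
    obtain ⟨h1, h2⟩ := hfV x⁻¹ hx
    exact ⟨by simpa using Set.mem_inv.mp h2, Set.mem_inv.mpr h1⟩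
  -- the two integrals
  have hfint : Integrable (fb : G → ℝ) m := hfc.integrable_of_hasCompactSupport hfbs
  have hfvint : Integrable (fun g : G => (fb : G → ℝ) g⁻¹) m :=
    hfvc.integrable_of_hasCompactSupport hfvs
  have ha : 0 < ∫ g, (fb : G → ℝ) g ∂m := by
    rw [integral_pos_iff_support_of_nonneg hf0 hfint]
    exact hfc.isOpen_support.measure_pos m ⟨1, by simp [hf1]⟩
  have hc : 0 < ∫ g, (fb : G → ℝ) g⁻¹ ∂m := by
    rw [integral_pos_iff_support_of_nonneg hfv0 hfvint]
    exact hfvc.isOpen_support.measure_pos m ⟨1, by simp [hf1]⟩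
  -- the two quotient functions
  obtain ⟨F₁, hF₁id, hF₁c, hF₁s⟩ := stmt13_exists_quotient_function Γ hfc hfbs
  obtain ⟨F₂, hF₂id, hF₂c, hF₂s⟩ := stmt13_exists_quotient_function Γ hfvc hfvs
  have ha₁ : ∫ g, (fb : G → ℝ) g ∂m = ∫ x, F₁ x ∂m' := hcompat _ hfc hfbs F₁ hF₁id
  have hc₂ : ∫ g, (fb : G → ℝ) g⁻¹ ∂m = ∫ x, F₂ x ∂m' := hcompat _ hfvc hfvs F₂ hF₂id
  have ht₁ : Tendsto (fun T : ℝ =>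
      (∫ g in {g : G | D g < T}, F₁ (QuotientGroup.mk g⁻¹) ∂m) /
        (m {g : G | D g < T}).toReal) atTop (𝓝 (∫ g, (fb : G → ℝ) g ∂m)) := by
    rw [ha₁]; exact hequi F₁ hF₁c hF₁s
  have ht₂ : Tendsto (fun T : ℝ =>
      (∫ g in {g : G | D g < T}, F₂ (QuotientGroup.mk g⁻¹) ∂m) /
        (m {g : G | D g < T}).toReal) atTop (𝓝 (∫ g, (fb : G → ℝ) g⁻¹ ∂m)) := by
    rw [hc₂]; exact hequi F₂ hF₂c hF₂s
  -- rewriting the integrands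
  have hI₁ : ∀ T : ℝ, (∫ g in {g : G | D g < T}, F₁ (QuotientGroup.mk g⁻¹) ∂m)
      = ∫ g in {g : G | D g < T}, (∑' γ : Γ, (fb : G → ℝ) (((γ : G))⁻¹ * g)⁻¹) ∂m := by
    intro T
    refine integral_congr_ae (Filter.Eventually.of_forall fun g => ?_)
    show F₁ (QuotientGroup.mk g⁻¹) = ∑' γ : Γ, (fb : G → ℝ) (((γ : G))⁻¹ * g)⁻¹
    rw [hF₁id g⁻¹]
    exact tsum_congr fun γ => by rw [mul_inv_rev, inv_inv]
  have hI₂ : ∀ T : ℝ, (∫ g in {g : G | D g < T}, F₂ (QuotientGroup.mk g⁻¹) ∂m)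
      = ∫ g in {g : G | D g < T}, (∑' γ : Γ, (fb : G → ℝ) (((γ : G))⁻¹ * g)) ∂m := by
    intro T
    refine integral_congr_ae (Filter.Eventually.of_forall fun g => ?_)
    show F₂ (QuotientGroup.mk g⁻¹) = ∑' γ : Γ, (fb : G → ℝ) (((γ : G))⁻¹ * g)
    rw [hF₂id g⁻¹]
    exact tsum_congr fun γ => by rw [mul_inv_rev, inv_inv]
  -- THE SANDWICH
  have sandwich : ∀ w : G → ℝ, Continuous w → HasCompactSupport w → (∀ x, 0 ≤ w x) →
      (∀ x, w x ≠ 0 → x ∈ U ∩ U⁻¹) → ∀ T : ℝ, 0 < T →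
      (∫ g, w g ∂m) * (Nat.card {γ : Γ | D (γ : G) < T / (1 + δ)} : ℝ) ≤
        (∫ g in {g : G | D g < T}, (∑' γ : Γ, w (((γ : G))⁻¹ * g)) ∂m) ∧
      (∫ g in {g : G | D g < T}, (∑' γ : Γ, w (((γ : G))⁻¹ * g)) ∂m) ≤
        (∫ g, w g ∂m) * (Nat.card {γ : Γ | D (γ : G) < (1 + δ) * T} : ℝ) := by
    intro w hwc hws hw0 hwV T hT
    have hs12 : (hNfin (T / (1 + δ))).toFinset ⊆ (hNfin ((1 + δ) * T)).toFinset := by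
      intro γ hγ
      rw [Set.Finite.mem_toFinset] at *
      have h' : T / (1 + δ) ≤ (1 + δ) * T :=
        (div_le_self hT.le (by linarith)).trans (le_mul_of_one_le_left hT.le (by linarith))
      exact lt_of_lt_of_le hγ h'
    have hterm : ∀ γ : Γ, Integrable (fun g => w (((γ : G))⁻¹ * g)) m := by
      intro γ
      have h1 : Continuous fun g => w (((γ : G))⁻¹ * g) :=
        hwc.comp (continuous_const.mul continuous_id)
      have h2 : HasCompactSupport fun g => w (((γ : G))⁻¹ * g) :=
        hws.comp_homeomorph (Homeomorph.mulLeft ((γ : G))⁻¹)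
      exact h1.integrable_of_hasCompactSupport h2
    have htermval : ∀ γ : Γ, (∫ g, w (((γ : G))⁻¹ * g) ∂m) = ∫ g, w g ∂m := fun γ =>
      integral_mul_left_eq_self w _
    have hptwise : ∀ g ∈ {g : G | D g < T},
        (∑' γ : Γ, w (((γ : G))⁻¹ * g)) = ∑ γ ∈ (hNfin ((1 + δ) * T)).toFinset, w (((γ : G))⁻¹ * g) := by
      intro g hg
      refine tsum_eq_sum fun γ hγ => ?_
      by_contra h0
      apply hγ
      rw [Set.Finite.mem_toFinset]
      have hx : ((γ : G))⁻¹ * g ∈ U ∩ U⁻¹ := hwV _ h0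
      have h2 := (hVprop _ hx).2 g
      have h1 : g * (((γ : G))⁻¹ * g)⁻¹ = (γ : G) := by group
      rw [h1] at h2
      show D (γ : G) < (1 + δ) * T
      calc D (γ : G) < (1 + δ) * D g := h2
        _ ≤ (1 + δ) * T := (mul_le_mul_iff_right₀ h1δ).mpr (le_of_lt hg)
    have hintrw : (∫ g in {g : G | D g < T}, (∑' γ : Γ, w (((γ : G))⁻¹ * g)) ∂m)
        = ∑ γ ∈ (hNfin ((1 + δ) * T)).toFinset, ∫ g in {g : G | D g < T}, w (((γ : G))⁻¹ * g) ∂m := by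
      rw [setIntegral_congr_fun (hGTmeas T) (fun g hg => hptwise g hg)]
      exact integral_finset_sum (hNfin ((1 + δ) * T)).toFinset fun γ _ => (hterm γ).restrict
    constructor
    · -- lower bound
      have hlowerterm : ∀ γ ∈ (hNfin (T / (1 + δ))).toFinset,
          (∫ g in {g : G | D g < T}, w (((γ : G))⁻¹ * g) ∂m) = ∫ g, w g ∂m := by
        intro γ hγ
        rw [← htermval γ]
        apply setIntegral_eq_integral_of_forall_compl_eq_zero
        intro g hg
        by_contra h0
        apply hg
        have hx : ((γ : G))⁻¹ * g ∈ U ∩ U⁻¹ := hwV _ h0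
        have h2 := (hVprop _ hx).1 (γ : G)
        have h1 : (γ : G) * (((γ : G))⁻¹ * g) = g := by group
        rw [h1] at h2
        rw [Set.Finite.mem_toFinset] at hγ
        have hγT : D (γ : G) < T / (1 + δ) := hγ
        show D g < T
        calc D g < (1 + δ) * D (γ : G) := h2
          _ < (1 + δ) * (T / (1 + δ)) := (mul_lt_mul_iff_right₀ h1δ).mpr hγT
          _ = T := by field_simp
      have step : ∑ γ ∈ (hNfin (T / (1 + δ))).toFinset, (∫ g in {g : G | D g < T}, w (((γ : G))⁻¹ * g) ∂m)
          ≤ ∑ γ ∈ (hNfin ((1 + δ) * T)).toFinset, ∫ g in {g : G | D g < T}, w (((γ : G))⁻¹ * g) ∂m :=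
        Finset.sum_le_sum_of_subset_of_nonneg hs12
          (fun γ _ _ => setIntegral_nonneg (hGTmeas T) fun g _ => hw0 _)
      have heq1 : ∑ γ ∈ (hNfin (T / (1 + δ))).toFinset, (∫ g in {g : G | D g < T}, w (((γ : G))⁻¹ * g) ∂m)
          = (∫ g, w g ∂m) * (Nat.card {γ : Γ | D (γ : G) < T / (1 + δ)} : ℝ) := by
        rw [Finset.sum_congr rfl hlowerterm, Finset.sum_const, nsmul_eq_mul, hcard, mul_comm]
      rw [hintrw, ← heq1]
      exact step
    · -- upper bound
      have hub : ∀ γ ∈ (hNfin ((1 + δ) * T)).toFinset,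
          (∫ g in {g : G | D g < T}, w (((γ : G))⁻¹ * g) ∂m) ≤ ∫ g, w g ∂m := by
        intro γ _
        rw [← htermval γ]
        exact setIntegral_le_integral (hterm γ) (Filter.Eventually.of_forall fun g => hw0 _)
      rw [hintrw]
      calc ∑ γ ∈ (hNfin ((1 + δ) * T)).toFinset, (∫ g in {g : G | D g < T}, w (((γ : G))⁻¹ * g) ∂m)
          ≤ ∑ _γ ∈ (hNfin ((1 + δ) * T)).toFinset, ∫ g, w g ∂m := Finset.sum_le_sum hub
        _ = (∫ g, w g ∂m) * (Nat.card {γ : Γ | D (γ : G) < (1 + δ) * T} : ℝ) := by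
            rw [Finset.sum_const, nsmul_eq_mul, hcard, mul_comm]
  -- eventual two-sided bounds
  have hband₁ := ht₁ (Ioo_mem_nhds
    (show (∫ g, (fb : G → ℝ) g ∂m) * (1 - ε₁) < ∫ g, (fb : G → ℝ) g ∂m by
      linarith [mul_pos ha hε₁])
    (show (∫ g, (fb : G → ℝ) g ∂m) < (∫ g, (fb : G → ℝ) g ∂m) * (1 + ε₁) by
      linarith [mul_pos ha hε₁]))
  have hband₂ := ht₂ (Ioo_mem_nhds
    (show (∫ g, (fb : G → ℝ) g⁻¹ ∂m) * (1 - ε₁) < ∫ g, (fb : G → ℝ) g⁻¹ ∂m by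
      linarith [mul_pos hc hε₁])
    (show (∫ g, (fb : G → ℝ) g⁻¹ ∂m) < (∫ g, (fb : G → ℝ) g⁻¹ ∂m) * (1 + ε₁) by
      linarith [mul_pos hc hε₁]))
  have hev : ∀ᶠ T in (atTop : Filter ℝ),
      ((Nat.card {γ : Γ | D (γ : G) < T / (1 + δ)} : ℝ)
        ≤ (1 + ε₁) * (m {g : G | D g < T}).toReal) ∧
      ((1 - ε₁) * (m {g : G | D g < T}).toReal
        ≤ (Nat.card {γ : Γ | D (γ : G) < (1 + δ) * T} : ℝ)) := by
    filter_upwards [hband₁, hband₂, eventually_gt_atTop (max 0 (D 1))] with T h₁ h₂ hTgt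
    have hT0 : 0 < T := lt_of_le_of_lt (le_max_left _ _) hTgt
    have hMT : 0 < (m {g : G | D g < T}).toReal := hMpos T (lt_of_le_of_lt (le_max_right _ _) hTgt)
    obtain ⟨L₁, R₁⟩ := sandwich _ hfvc hfvs hfv0 hfvV T hT0
    obtain ⟨L₂, R₂⟩ := sandwich _ hfc hfbs hf0 hfV T hT0
    rw [← hI₁ T] at L₁ R₁
    rw [← hI₂ T] at L₂ R₂
    have u₁ : (∫ g in {g : G | D g < T}, F₁ (QuotientGroup.mk g⁻¹) ∂m)
        < (∫ g, (fb : G → ℝ) g ∂m) * (1 + ε₁) * (m {g : G | D g < T}).toReal := by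
      have := (div_lt_iff₀ hMT).mp h₁.2
      linarith
    have l₁ : (∫ g, (fb : G → ℝ) g ∂m) * (1 - ε₁) * (m {g : G | D g < T}).toReal
        < (∫ g in {g : G | D g < T}, F₁ (QuotientGroup.mk g⁻¹) ∂m) := by
      have := (lt_div_iff₀ hMT).mp h₁.1
      linarith
    have u₂ : (∫ g in {g : G | D g < T}, F₂ (QuotientGroup.mk g⁻¹) ∂m)
        < (∫ g, (fb : G → ℝ) g⁻¹ ∂m) * (1 + ε₁) * (m {g : G | D g < T}).toReal := by
      have := (div_lt_iff₀ hMT).mp h₂.2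
      linarith
    have l₂ : (∫ g, (fb : G → ℝ) g⁻¹ ∂m) * (1 - ε₁) * (m {g : G | D g < T}).toReal
        < (∫ g in {g : G | D g < T}, F₂ (QuotientGroup.mk g⁻¹) ∂m) := by
      have := (lt_div_iff₀ hMT).mp h₂.1
      linarith
    have hN1 : (0:ℝ) ≤ (Nat.card {γ : Γ | D (γ : G) < T / (1 + δ)} : ℝ) := Nat.cast_nonneg _
    have hN2 : (0:ℝ) ≤ (Nat.card {γ : Γ | D (γ : G) < (1 + δ) * T} : ℝ) := Nat.cast_nonneg _
    constructor
    · -- upper bound on the smaller count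
      have hsum : ((∫ g, (fb : G → ℝ) g ∂m) + (∫ g, (fb : G → ℝ) g⁻¹ ∂m)) *
          (Nat.card {γ : Γ | D (γ : G) < T / (1 + δ)} : ℝ)
          < ((∫ g, (fb : G → ℝ) g ∂m) + (∫ g, (fb : G → ℝ) g⁻¹ ∂m)) *
            ((1 + ε₁) * (m {g : G | D g < T}).toReal) := by linarith [L₁, L₂, u₁, u₂]
      have := lt_of_mul_lt_mul_left hsum (by linarith : (0:ℝ) ≤
        (∫ g, (fb : G → ℝ) g ∂m) + (∫ g, (fb : G → ℝ) g⁻¹ ∂m))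
      linarith
    · -- lower bound on the larger count
      have hsum : ((∫ g, (fb : G → ℝ) g ∂m) + (∫ g, (fb : G → ℝ) g⁻¹ ∂m)) *
          ((1 - ε₁) * (m {g : G | D g < T}).toReal)
          < ((∫ g, (fb : G → ℝ) g ∂m) + (∫ g, (fb : G → ℝ) g⁻¹ ∂m)) *
            (Nat.card {γ : Γ | D (γ : G) < (1 + δ) * T} : ℝ) := by linarith [R₁, R₂, l₁, l₂]
      have := lt_of_mul_lt_mul_left hsum (by linarith : (0:ℝ) ≤
        (∫ g, (fb : G → ℝ) g ∂m) + (∫ g, (fb : G → ℝ) g⁻¹ ∂m))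
      linarith
  -- transfer along T ↦ (1+δ)T and T ↦ T/(1+δ)
  have hmul : Tendsto (fun S : ℝ => (1 + δ) * S) atTop atTop :=
    Tendsto.const_mul_atTop h1δ tendsto_id
  have hdiv : Tendsto (fun S : ℝ => S / (1 + δ)) atTop atTop :=
    Tendsto.atTop_div_const h1δ tendsto_id
  filter_upwards [hmul.eventually hev, hdiv.eventually hev,
    eventually_gt_atTop (max T₀ (D 1)), hdiv.eventually (eventually_gt_atTop T₀)]
    with S h1 h2 hS h3
  have hST₀ : T₀ < S := lt_of_le_of_lt (le_max_left _ _) hS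
  have hMS : 0 < (m {g : G | D g < S}).toReal := hMpos S (lt_of_le_of_lt (le_max_right _ _) hS)
  have e1 : (1 + δ) * S / (1 + δ) = S := by field_simp
  have e2 : (1 + δ) * (S / (1 + δ)) = S := by field_simp
  rw [e1] at h1
  rw [e2] at h2
  have hI1S : (m {g : G | D g < (1 + δ) * S}).toReal
      ≤ (1 + ε₁) * (m {g : G | D g < S}).toReal := hT₀ S hST₀
  have hI1S' : (m {g : G | D g < S}).toReal
      ≤ (1 + ε₁) * (m {g : G | D g < S / (1 + δ)}).toReal := by
    have := hT₀ (S / (1 + δ)) h3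
    rw [e2] at this
    exact this
  -- upper estimate
  have hup : (Nat.card {γ : Γ | D (γ : G) < S} : ℝ)
      ≤ (1 + ε₁) * ((1 + ε₁) * (m {g : G | D g < S}).toReal) := by
    refine h1.1.trans ?_
    exact mul_le_mul_of_nonneg_left hI1S (by linarith)
  -- lower estimate
  have hlow : (1 - ε₁) * (m {g : G | D g < S}).toReal
      ≤ (1 + ε₁) * (Nat.card {γ : Γ | D (γ : G) < S} : ℝ) := by
    calc (1 - ε₁) * (m {g : G | D g < S}).toReal
        ≤ (1 - ε₁) * ((1 + ε₁) * (m {g : G | D g < S / (1 + δ)}).toReal) :=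
          mul_le_mul_of_nonneg_left hI1S' (by linarith)
      _ = (1 + ε₁) * ((1 - ε₁) * (m {g : G | D g < S / (1 + δ)}).toReal) := by ring
      _ ≤ (1 + ε₁) * (Nat.card {γ : Γ | D (γ : G) < S} : ℝ) :=
          mul_le_mul_of_nonneg_left h2.2 (by linarith)
  -- conclude
  have hN0 : (0:ℝ) ≤ (Nat.card {γ : Γ | D (γ : G) < S} : ℝ) := Nat.cast_nonneg _
  rw [Real.dist_eq, abs_lt]
  have hsq : ε₁ * ε₁ ≤ ε₁ := mul_le_of_le_one_right hε₁.le (by linarith)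
  have hprod : 0 ≤ ε * ε₁ := mul_nonneg hε.le hε₁.le
  have key2 : (1 - ε) * (1 + ε₁) < 1 - ε₁ := by nlinarith [hprod, hε₁le, hε]
  have key3 : (1 + ε₁) * (1 + ε₁) < 1 + ε := by nlinarith [hsq, hε₁le, hε]
  constructor
  · have hstrict : (1 + ε₁) * ((1 - ε) * (m {g : G | D g < S}).toReal)
        < (1 + ε₁) * (Nat.card {γ : Γ | D (γ : G) < S} : ℝ) := by
      have hkey := mul_lt_mul_of_pos_right key2 hMS
      linarith [hkey, hlow]
    have h4 : (1 - ε) * (m {g : G | D g < S}).toReal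
        < (Nat.card {γ : Γ | D (γ : G) < S} : ℝ) :=
      lt_of_mul_lt_mul_left hstrict (by linarith)
    have h5 : 1 - ε < (Nat.card {γ : Γ | D (γ : G) < S} : ℝ) / (m {g : G | D g < S}).toReal := by
      rw [lt_div_iff₀ hMS]
      exact h4
    linarith
  · have h4 : (Nat.card {γ : Γ | D (γ : G) < S} : ℝ)
        < (1 + ε) * (m {g : G | D g < S}).toReal := by
      have hkey := mul_lt_mul_of_pos_right key3 hMS
      linarith [hkey, hup]
    have h5 : (Nat.card {γ : Γ | D (γ : G) < S} : ℝ) / (m {g : G | D g < S}).toReal < 1 + ε := by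
      rw [div_lt_iff₀ hMS]
      exact h4
    linarith
end
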